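/- arXiv:2305.14276 — 7 statements merged into one kernel-verified Lean document; each statement's English description precedes it below -/
import Mathlib

section
/- Let p ≥ 7 be prime and β_r = 2cos(rπ/(2p)) for 1 ≤ r ≤ p-1. Then for every 1 ≤ r < s ≤ p-1, the set {1, β_r, β_s} is linearly independent over ℚ. -/
open Real

open Polynomial Complex in
theorem cyclo2p_mul (p : ℕ) (hp : p.Prime) (hp7 : 7 ≤ p) :
    (X + 1 : ℚ[X]) * cyclotomic (2*p) ℚ = X^p + 1 := by
  have hdiv : (2*p).divisors = {1, 2, p, 2*p} := by
    rw [Nat.divisors_mul, Nat.Prime.divisors Nat.prime_two, Nat.Prime.divisors hp]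
    ext d
    simp [Finset.mem_mul]
    omega
  have h2p : (∏ i ∈ (2*p).divisors, cyclotomic i ℚ) = X^(2*p) - 1 :=
    prod_cyclotomic_eq_X_pow_sub_one (by omega) ℚ
  have hpp : (∏ i ∈ p.divisors, cyclotomic i ℚ) = X^p - 1 :=
    prod_cyclotomic_eq_X_pow_sub_one (by omega) ℚ
  rw [hdiv] at h2p
  rw [Nat.Prime.divisors hp] at hpp
  have hprod : cyclotomic 1 ℚ * (cyclotomic 2 ℚ * (cyclotomic p ℚ * cyclotomic (2*p) ℚ))
      = X^(2*p) - 1 := by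
    rw [← h2p]
    rw [Finset.prod_insert (by simp; omega), Finset.prod_insert (by simp; omega),
      Finset.prod_insert (by simp; omega), Finset.prod_singleton]
  have hprodp : cyclotomic 1 ℚ * cyclotomic p ℚ = X^p - 1 := by
    rw [← hpp, Finset.prod_insert (by simp; omega), Finset.prod_singleton]
  have hne : (X^p - 1 : ℚ[X]) ≠ 0 := by
    intro h
    have := congrArg (Polynomial.eval 0) h
    simp [zero_pow (show p ≠ 0 by omega)] at this
  apply mul_left_cancel₀ hne
  have : (X^p - 1 : ℚ[X]) * ((X+1) * cyclotomic (2*p) ℚ)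
      = cyclotomic 1 ℚ * (cyclotomic 2 ℚ * (cyclotomic p ℚ * cyclotomic (2*p) ℚ)) := by
    rw [← hprodp, cyclotomic_two]; ring
  rw [this, hprod]; ring

open Polynomial in
theorem cyclo2p_coeff (p : ℕ) (hp : p.Prime) (hp7 : 7 ≤ p)
    (k : ℕ) (hk : k ≤ 3) : (cyclotomic (2*p) ℚ).coeff k = (-1)^k := by
  have h2p := cyclo2p_mul p hp hp7
  have h0 : (cyclotomic (2*p) ℚ).coeff 0 = 1 := cyclotomic_coeff_zero ℚ (by omega)
  have step : ∀ j : ℕ, j + 1 < p →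
      (cyclotomic (2*p) ℚ).coeff (j+1) = -(cyclotomic (2*p) ℚ).coeff j := by
    intro j hj
    have := congrArg (fun q => Polynomial.coeff q (j+1)) h2p
    simp only [coeff_add, add_mul, one_mul, coeff_X_mul, coeff_X_pow, coeff_one] at this
    rw [if_neg (by omega), if_neg (by omega)] at this
    linarith
  interval_cases k
  · simpa using h0
  · rw [show (1:ℕ) = 0 + 1 from rfl, step 0 (by omega), h0]; norm_num
  · rw [show (2:ℕ) = 1 + 1 from rfl, step 1 (by omega),
      show (1:ℕ) = 0 + 1 from rfl, step 0 (by omega), h0]; norm_num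
  · rw [show (3:ℕ) = 2 + 1 from rfl, step 2 (by omega),
      show (2:ℕ) = 1 + 1 from rfl, step 1 (by omega),
      show (1:ℕ) = 0 + 1 from rfl, step 0 (by omega), h0]; norm_num

open Polynomial in
theorem cyclo4p_coeff (p : ℕ) (hp : p.Prime) (hp7 : 7 ≤ p)
    (k : ℕ) (hk : k ≤ 3) : (cyclotomic (4*p) ℚ).coeff (2*k) = (-1)^k := by
  rw [show 4*p = 2*p*2 by ring,
    ← cyclotomic_expand_eq_cyclotomic Nat.prime_two (Dvd.intro p rfl) ℚ,
    coeff_expand two_pos, if_pos (Dvd.intro k rfl), Nat.mul_div_cancel_left k two_pos]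
  exact cyclo2p_coeff p hp hp7 k hk

open Polynomial Complex in
theorem key_relation (p : ℕ) (hp : p.Prime) (hp7 : 7 ≤ p)
    (r s : ℕ) (hr : 1 ≤ r) (hrs : r < s) (hs : s ≤ p - 1) (a b c : ℚ)
    (h : (a:ℝ) + b * (2 * Real.cos (r * π / (2 * p))) + c * (2 * Real.cos (s * π / (2 * p))) = 0) :
    a = 0 ∧ b = 0 ∧ c = 0 := by
  have hp0 : (0:ℝ) < p := by positivity
  have hpC : (p:ℂ) ≠ 0 := by exact_mod_cast (show (p:ℝ) ≠ 0 by positivity)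
  set ζ : ℂ := Complex.exp (2 * π * I / (4*p)) with hζdef
  have hζ : IsPrimitiveRoot ζ (4*p) := by
    have := Complex.isPrimitiveRoot_exp (4*p) (by omega)
    convert this using 2
    push_cast; ring
  have hpow : ∀ t : ℕ, ζ ^ t = Complex.exp ((t * π / (2*p)) * I) := by
    intro t
    rw [hζdef, ← Complex.exp_nat_mul]
    congr 1
    field_simp
    ring
  have hconj : ∀ t : ℕ, t ≤ 4*p → ζ ^ (4*p - t) = Complex.exp (-((t * π / (2*p)) * I)) := by
    intro t ht
    rw [hpow]
    have : ((4*p - t : ℕ) : ℂ) * π / (2*p) * I = 2*π*I + -((t * π / (2*p)) * I) := by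
      rw [Nat.cast_sub ht]
      push_cast
      field_simp
      ring
    rw [this, Complex.exp_add, Complex.exp_two_pi_mul_I, one_mul]
  have hbeta : ∀ t : ℕ, t ≤ 4*p →
      ζ ^ t + ζ ^ (4*p - t) = ((2 * Real.cos (t * π / (2*p)) : ℝ) : ℂ) := by
    intro t ht
    rw [hpow, hconj t ht]
    push_cast
    rw [Complex.two_cos]
    ring_nf
  have hC : (a:ℂ) + b * (ζ^r + ζ^(4*p - r)) + c * (ζ^s + ζ^(4*p - s)) = 0 := by
    rw [hbeta r (by omega), hbeta s (by omega)]
    exact_mod_cast congrArg (fun x : ℝ => (x : ℂ)) h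
  set P : ℚ[X] := C a * X^s + C b * X^(s+r) + C b * X^(s-r) + C c * X^(2*s) + C c with hPdef
  have e1 : ζ^s * ζ^(4*p - r) = ζ^(s - r) := by
    rw [← pow_add, show s + (4*p - r) = (s - r) + 4*p by omega, pow_add, hζ.pow_eq_one, mul_one]
  have e2 : ζ^s * ζ^(4*p - s) = 1 := by
    rw [← pow_add, show s + (4*p - s) = 4*p by omega, hζ.pow_eq_one]
  have haeval : Polynomial.aeval ζ P = 0 := by
    simp only [hPdef, map_add, map_mul, map_pow, aeval_C, aeval_X]
    have halg : ∀ q : ℚ, algebraMap ℚ ℂ q = (q:ℂ) := fun q => rfl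
    rw [halg, halg, halg]
    linear_combination ζ^s * hC - (b:ℂ) * e1 - (c:ℂ) * e2
  have hdvd : cyclotomic (4*p) ℚ ∣ P := by
    rw [cyclotomic_eq_minpoly_rat hζ (by omega)]
    exact minpoly.dvd ℚ ζ haeval
  have hΦdeg : (cyclotomic (4*p) ℚ).natDegree = 2*(p-1) := by
    rw [natDegree_cyclotomic]
    have hcop : Nat.Coprime 4 p := by
      have h2 : Nat.Coprime 2 p := (Nat.coprime_primes Nat.prime_two hp).mpr (by omega)
      exact Nat.Coprime.pow_left 2 h2
    rw [Nat.totient_mul hcop, Nat.totient_prime hp]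
    norm_num [show Nat.totient 4 = 2 from rfl]
  have coeffP : ∀ n, P.coeff n = (if n = s then a else 0) + (if n = s+r then b else 0)
      + (if n = s - r then b else 0) + (if n = 2*s then c else 0) + (if n = 0 then c else 0) := by
    intro n
    simp [hPdef, coeff_X_pow, coeff_C, mul_ite]
  have hPdeg : P.natDegree ≤ 2*s := by
    apply natDegree_le_iff_coeff_eq_zero.mpr
    intro n hn
    rw [coeffP]
    rw [if_neg (by omega), if_neg (by omega), if_neg (by omega), if_neg (by omega),
      if_neg (by omega)]
    ring
  have hkey : P = C P.leadingCoeff * cyclotomic (4*p) ℚ :=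
    eq_leadingCoeff_mul_of_monic_of_dvd_of_natDegree_le (cyclotomic.monic _ _) hdvd
      (by rw [hΦdeg]; omega)
  have hl : P.leadingCoeff = 0 := by
    by_cases hsp : s = p - 1
    · obtain ⟨k, hk1, hk3, hkne1, hkne2⟩ :
          ∃ k, 1 ≤ k ∧ k ≤ 3 ∧ 2*k ≠ s - r ∧ 2*k ≠ s := by
        by_cases h1 : 2 ≠ s - r ∧ 2 ≠ s
        · exact ⟨1, by omega⟩
        by_cases h2 : 4 ≠ s - r ∧ 4 ≠ s
        · exact ⟨2, by omega⟩
        exact ⟨3, by omega⟩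
      have h1 : P.coeff (2*k) = 0 := by
        rw [coeffP]
        rw [if_neg (by omega), if_neg (by omega), if_neg (by omega), if_neg (by omega),
          if_neg (by omega)]
        ring
      have h2 : P.coeff (2*k) = P.leadingCoeff * (-1)^k := by
        conv_lhs => rw [hkey]
        rw [coeff_C_mul, cyclo4p_coeff p hp hp7 k hk3]
      rw [h1] at h2
      have hne : ((-1:ℚ))^k ≠ 0 := pow_ne_zero k (by norm_num)
      rcases mul_eq_zero.mp h2.symm with h' | h'
      · exact h'
      · exact absurd h' hne
    · by_contra hl0
      have hd := hPdeg
      rw [hkey, natDegree_C_mul hl0, hΦdeg] at hd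
      omega
  have hP0 : P = 0 := by rw [hkey, hl, map_zero, zero_mul]
  have hcoeff0 : ∀ n, P.coeff n = 0 := by rw [hP0]; simp
  refine ⟨?_, ?_, ?_⟩
  · have := hcoeff0 s
    rw [coeffP, if_pos rfl, if_neg (by omega), if_neg (by omega), if_neg (by omega),
      if_neg (by omega)] at this
    linarith
  · have := hcoeff0 (s+r)
    rw [coeffP, if_neg (by omega), if_pos rfl, if_neg (by omega), if_neg (by omega),
      if_neg (by omega)] at this
    linarith
  · have := hcoeff0 (2*s)
    rw [coeffP, if_neg (by omega), if_neg (by omega), if_neg (by omega), if_pos rfl,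
      if_neg (by omega)] at this
    linarith

theorem stmt4 (p : ℕ) (hp : p.Prime) (hp7 : 7 ≤ p)
    (r s : ℕ) (hr : 1 ≤ r) (hrs : r < s) (hs : s ≤ p - 1) :
    LinearIndependent ℚ
      ![(1 : ℝ), 2 * Real.cos (r * π / (2 * p)), 2 * Real.cos (s * π / (2 * p))] := by
  rw [Fintype.linearIndependent_iff]
  intro g hg
  rw [Fin.sum_univ_three] at hg
  simp only [Matrix.cons_val_zero, Matrix.cons_val_one, Matrix.head_cons,
    Matrix.cons_val_two, Matrix.tail_cons, smul_eq_mul, Rat.smul_def, mul_one] at hg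
  obtain ⟨h0, h1, h2⟩ := key_relation p hp hp7 r s hr hrs hs (g 0) (g 1) (g 2) (by linarith [hg])
  intro i
  fin_cases i <;> assumption
end

section
/- Let p_1, ..., p_k ≥ 5 be distinct primes and suppose n_i = p_i - 1 or n_i = 2p_i - 1 for each i. If λ_i and λ'_i are eigenvalues of P_{n_i} (numbers 2cos(rπ/(n_i+1)) with 1 ≤ r ≤ n_i) for each i, and λ_1 + ... + λ_k = λ'_1 + ... + λ'_k, then λ_i = λ'_i for all i. In particular the cartesian product P_{n_1} □ ... □ P_{n_k} has simple eigenvalues. -/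
open Real Complex Polynomial Finset

lemma two_cos_complex (θ : ℝ) :
    ((2 * Real.cos θ : ℝ) : ℂ) = Complex.exp ((θ:ℂ) * Complex.I) + Complex.exp (-(θ:ℂ) * Complex.I) := by
  push_cast; rw [Complex.cos]; ring

lemma cos_odd_half_pi (a : ℕ) : Real.cos ((2*a+1 : ℕ) * (π/2)) = 0 := by
  have : ((2*a+1 : ℕ) : ℝ) * (π/2) = a * π + π/2 := by push_cast; ring
  rw [this, Real.cos_add]
  simp [Real.sin_nat_mul_pi, Real.cos_pi_div_two]

lemma exists_int_two_cos_half (kk : ℕ) :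
    ∃ z : ℤ, |z| ≤ 2 ∧ (z:ℝ) = 2 * Real.cos (kk * (π/2)) := by
  have hk : (kk : ℝ) = (kk % 4 : ℕ) + 4 * ((kk/4 : ℕ) : ℝ) := by
    exact_mod_cast (congrArg (Nat.cast : ℕ → ℝ) (Nat.mod_add_div kk 4)).symm
  have h4 : (kk : ℝ) * (π/2) = (kk % 4 : ℕ) * (π/2) + ((kk / 4 : ℕ) : ℤ) * (2*π) := by
    rw [hk]; simp only [Int.cast_natCast]; ring
  rw [h4, Real.cos_add_int_mul_two_pi]
  have hlt : kk % 4 < 4 := Nat.mod_lt _ (by norm_num)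
  interval_cases h : kk % 4
  · exact ⟨2, by norm_num⟩
  · exact ⟨0, by norm_num [Real.cos_pi_div_two]⟩
  · refine ⟨-2, by norm_num, ?_⟩
    have : ((2:ℕ):ℝ) * (π/2) = π := by push_cast; ring
    rw [this, Real.cos_pi]; norm_num
  · refine ⟨0, by norm_num, ?_⟩
    have : ((3:ℕ):ℝ) * (π/2) = π + π/2 := by push_cast; ring
    rw [this, Real.cos_add]
    simp [Real.cos_pi_div_two]

lemma pair_eq {N m : ℕ} (hm : 0 < m) (hN : 0 < N) (hdvd : 2*m ∣ N) (r t : ℕ)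
    (hr : r * (N/(2*m)) ≤ N) :
    (Complex.exp (2*(π:ℂ)*Complex.I/N) ^ t) ^ (r*(N/(2*m))) +
    (Complex.exp (2*(π:ℂ)*Complex.I/N) ^ t) ^ (N - r*(N/(2*m))) =
    ((2 * Real.cos (t*r*π/m) : ℝ) : ℂ) := by
  set c := N/(2*m) with hcdef
  have hc : 2*m*c = N := Nat.mul_div_cancel' hdvd
  have hc0 : c ≠ 0 := by rintro h; rw [h] at hc; omega
  have hm0 : (m:ℂ) ≠ 0 := Nat.cast_ne_zero.mpr hm.ne'
  have hcC : (c:ℂ) ≠ 0 := Nat.cast_ne_zero.mpr hc0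
  have hNC : (N:ℂ) = 2*m*c := by exact_mod_cast hc.symm
  have key : ∀ x : ℕ, (Complex.exp (2*(π:ℂ)*Complex.I/N)) ^ x
      = Complex.exp ((x:ℂ) * (2*(π:ℂ)*Complex.I/N)) := fun x => (Complex.exp_nat_mul _ x).symm
  have angle1 : ((t*(r*c) : ℕ):ℂ) * (2*(π:ℂ)*Complex.I/N) = ((t*r*π/m : ℝ):ℂ) * Complex.I := by
    push_cast
    rw [hNC]
    field_simp
  have h1 : (Complex.exp (2*(π:ℂ)*Complex.I/N) ^ t) ^ (r*c)
      = Complex.exp (((t*r*π/m : ℝ):ℂ) * Complex.I) := by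
    rw [← pow_mul, key, angle1]
  
  have h2 : (Complex.exp (2*(π:ℂ)*Complex.I/N) ^ t) ^ (N - r*c)
      = Complex.exp (-((t*r*π/m : ℝ):ℂ) * Complex.I) := by
    rw [← pow_mul, key]
    have hle : t*(r*c) ≤ t*N := Nat.mul_le_mul_left t hr
    have hcast : ((t*(N - r*c) : ℕ):ℂ) = (t*N : ℕ) - ((t*(r*c) : ℕ):ℂ) := by
      have : t*(N-r*c) + t*(r*c) = t*N := by
        rw [← Nat.mul_add, Nat.sub_add_cancel hr]
      exact_mod_cast congrArg (Nat.cast (R := ℂ)) (Nat.eq_sub_of_add_eq this) |>.trans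
        (Nat.cast_sub hle)
    rw [hcast, sub_mul, Complex.exp_sub]
    have hfull : Complex.exp (((t*N : ℕ):ℂ) * (2*(π:ℂ)*Complex.I/N)) = 1 := by
      have : ((t*N : ℕ):ℂ) * (2*(π:ℂ)*Complex.I/N) = (t:ℂ) * (2*π*Complex.I) := by
        push_cast
        have hN0 : (N:ℂ) ≠ 0 := Nat.cast_ne_zero.mpr hN.ne'
        field_simp
      rw [this, Complex.exp_nat_mul_two_pi_mul_I]
    rw [hfull, angle1, neg_mul, Complex.exp_neg]
    simp [one_div]
  rw [h1, h2, two_cos_complex]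


lemma star_lemma {k N : ℕ} (hN : 0 < N) (m : Fin k → ℕ) (hm : ∀ i, 0 < m i)
    (hdvd : ∀ i, 2 * m i ∣ N) (r r' : Fin k → ℕ)
    (hr : ∀ i, r i ≤ 2 * m i) (hr' : ∀ i, r' i ≤ 2 * m i)
    (hsum : ∑ i, 2 * Real.cos (r i * π / m i) = ∑ i, 2 * Real.cos (r' i * π / m i))
    (t : ℕ) (ht : Nat.Coprime t N) :
    ∑ i, 2 * Real.cos (t * r i * π / m i) = ∑ i, 2 * Real.cos (t * r' i * π / m i) := by
  set ζ := Complex.exp (2*(π:ℂ)*Complex.I/N) with hζdef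
  have hζ : IsPrimitiveRoot ζ N := Complex.isPrimitiveRoot_exp N hN.ne'
  let a : Fin k → ℕ := fun i => r i * (N/(2 * m i))
  let b : Fin k → ℕ := fun i => r' i * (N/(2 * m i))
  have haN : ∀ i, a i ≤ N := by
    intro i
    calc a i ≤ 2 * m i * (N/(2*m i)) := by
          exact Nat.mul_le_mul_right _ (hr i)
      _ = N := Nat.mul_div_cancel' (hdvd i)
  have hbN : ∀ i, b i ≤ N := by
    intro i
    calc b i ≤ 2 * m i * (N/(2*m i)) := by
          exact Nat.mul_le_mul_right _ (hr' i)
      _ = N := Nat.mul_div_cancel' (hdvd i)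
  set P : ℚ[X] := ∑ i, ((X:ℚ[X])^(a i) + X^(N - a i) - X^(b i) - X^(N - b i)) with hPdef
  have haP : ∀ u : ℂ, aeval u P = ∑ i, (u^(a i) + u^(N - a i) - u^(b i) - u^(N - b i)) := by
    intro u
    simp [hPdef, map_sum]
  -- evaluation at ζ^s for s : ℕ gives the cos sums
  have heval : ∀ s : ℕ, aeval (ζ^s) P =
      ((∑ i, 2 * Real.cos (s * r i * π / m i) : ℝ) : ℂ)
      - ((∑ i, 2 * Real.cos (s * r' i * π / m i) : ℝ) : ℂ) := by
    intro s
    rw [haP]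
    push_cast [Complex.ofReal_sum]
    rw [← Finset.sum_sub_distrib]
    apply Finset.sum_congr rfl
    intro i _
    have e1 := pair_eq (hm i) hN (hdvd i) (r i) s (haN i)
    have e2 := pair_eq (hm i) hN (hdvd i) (r' i) s (hbN i)
    rw [hζdef]
    push_cast at e1 e2
    show (cexp (2 * ↑π * I / ↑N) ^ s) ^ (r i * (N / (2 * m i))) +
        (cexp (2 * ↑π * I / ↑N) ^ s) ^ (N - r i * (N / (2 * m i))) -
        (cexp (2 * ↑π * I / ↑N) ^ s) ^ (r' i * (N / (2 * m i))) -
        (cexp (2 * ↑π * I / ↑N) ^ s) ^ (N - r' i * (N / (2 * m i))) = _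
    rw [e1]
    rw [sub_sub, e2]
  have h0 : aeval ζ P = 0 := by
    have := heval 1
    rw [pow_one] at this
    rw [this]
    simp only [Nat.cast_one, one_mul]
    rw [hsum]
    ring
  have hmin : minpoly ℚ ζ ∣ P := minpoly.dvd ℚ ζ h0
  have hζt : IsPrimitiveRoot (ζ^t) N := (hζ.pow_iff_coprime hN t).mpr ht
  have hmin_eq : minpoly ℚ ζ = minpoly ℚ (ζ^t) := by
    rw [← Polynomial.cyclotomic_eq_minpoly_rat hζ hN,
        ← Polynomial.cyclotomic_eq_minpoly_rat hζt hN]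
  have h0t : aeval (ζ^t) P = 0 := by
    obtain ⟨q, hq⟩ := hmin
    rw [hq, map_mul, hmin_eq, minpoly.aeval, zero_mul]
  have := heval t
  rw [h0t] at this
  have h2 := sub_eq_zero.mp this.symm
  exact_mod_cast h2


lemma sum_exp_arith (pp : ℕ) (θ δ : ℝ)
    (hpow : Complex.exp ((δ:ℂ) * Complex.I) ^ pp = 1)
    (hne : Complex.exp ((δ:ℂ) * Complex.I) ≠ 1) :
    ∑ s ∈ Finset.range pp, Complex.exp (((θ + s*δ : ℝ):ℂ) * Complex.I) = 0 := by
  have hterm : ∀ s : ℕ, Complex.exp (((θ + s*δ : ℝ):ℂ) * Complex.I)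
      = Complex.exp ((θ:ℂ)*Complex.I) * (Complex.exp ((δ:ℂ)*Complex.I))^s := by
    intro s
    rw [← Complex.exp_nat_mul, ← Complex.exp_add]
    push_cast
    ring_nf
  simp only [hterm, ← Finset.mul_sum]
  rw [geom_sum_eq hne, hpow]
  simp

lemma sum_two_cos_zero (pp : ℕ) (θ δ : ℝ)
    (hpow : Complex.exp ((δ:ℂ) * Complex.I) ^ pp = 1)
    (hne : Complex.exp ((δ:ℂ) * Complex.I) ≠ 1) :
    ∑ s ∈ Finset.range pp, 2 * Real.cos (θ + s*δ) = 0 := by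
  have hpow' : Complex.exp (((-δ : ℝ):ℂ) * Complex.I) ^ pp = 1 := by
    push_cast
    rw [neg_mul, Complex.exp_neg, inv_pow, hpow, inv_one]
  have hne' : Complex.exp (((-δ : ℝ):ℂ) * Complex.I) ≠ 1 := by
    push_cast
    rw [neg_mul, Complex.exp_neg]
    simpa using hne
  have h1 := sum_exp_arith pp θ δ hpow hne
  have h2 := sum_exp_arith pp (-θ) (-δ) hpow' hne'
  have key : ((∑ s ∈ Finset.range pp, 2 * Real.cos (θ + s*δ) : ℝ):ℂ)
      = (∑ s ∈ Finset.range pp, Complex.exp (((θ + s*δ : ℝ):ℂ) * Complex.I))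
      + (∑ s ∈ Finset.range pp, Complex.exp (((-θ + s*(-δ) : ℝ):ℂ) * Complex.I)) := by
    rw [Complex.ofReal_sum, ← Finset.sum_add_distrib]
    apply Finset.sum_congr rfl
    intro s _
    rw [two_cos_complex]
    congr 2
    · push_cast; ring
  have : ((∑ s ∈ Finset.range pp, 2 * Real.cos (θ + s*δ) : ℝ):ℂ) = 0 := by
    rw [key, h1, h2, add_zero]
  exact_mod_cast this

lemma isIntegral_two_cos (r m : ℕ) (hm : 0 < m) :
    IsIntegral ℤ (2 * Real.cos (r * π / m) : ℝ) := by
  set θ : ℝ := r * π / m with hθ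
  set u : ℂ := Complex.exp ((θ:ℂ) * Complex.I) with hu
  have hu2m : u ^ (2*m) = 1 := by
    rw [hu, ← Complex.exp_nat_mul]
    have : ((2*m : ℕ):ℂ) * ((θ:ℂ) * Complex.I) = (r:ℂ) * (2*π*Complex.I) := by
      rw [hθ]
      have hm0 : (m:ℂ) ≠ 0 := Nat.cast_ne_zero.mpr hm.ne'
      push_cast
      field_simp
    rw [this]
    exact_mod_cast Complex.exp_nat_mul_two_pi_mul_I r
  have hui : IsIntegral ℤ u := by
    refine ⟨X^(2*m) - 1, ?_, ?_⟩
    · apply Polynomial.monic_X_pow_sub_C _ (by omega)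
    · simp [hu2m]
  have hsum : IsIntegral ℤ (u + u^(2*m-1)) := hui.add (hui.pow _)
  have heq : ((2 * Real.cos θ : ℝ):ℂ) = u + u^(2*m-1) := by
    rw [two_cos_complex]
    congr 1
    have : u^(2*m-1) * u = 1 := by
      rw [← pow_succ]
      have : 2*m - 1 + 1 = 2*m := by omega
      rw [this, hu2m]
    have hinv : u^(2*m-1) = u⁻¹ := eq_inv_of_mul_eq_one_left this
    rw [hinv, hu, ← Complex.exp_neg]
    ring_nf
  have : IsIntegral ℤ ((2 * Real.cos θ : ℝ):ℂ) := heq ▸ hsum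
  exact IsIntegral.tower_bot (algebraMap ℝ ℂ).injective (by exact_mod_cast this)

lemma rat_of_integral (x : ℝ) (q : ℚ) (hx : IsIntegral ℤ x) (hq : (q:ℝ) = x) :
    ∃ z : ℤ, (z:ℚ) = q := by
  have h1 : IsIntegral ℤ ((q:ℝ)) := hq ▸ hx
  have h2 : IsIntegral ℤ q := by
    have := isIntegral_algebraMap_iff (A := ℚ) (B := ℝ) (R := ℤ) (x := q)
      (algebraMap ℚ ℝ).injective
    exact this.mp (by exact_mod_cast h1)
  obtain ⟨z, hz⟩ := IsIntegrallyClosed.isIntegral_iff.mp h2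
  exact ⟨z, by exact_mod_cast hz⟩

lemma cos_shift {m c' : ℕ} (hm : 0 < m) (hdvd : 2*m ∣ c') (ρ : ℕ) :
    Real.cos (((1 + c' : ℕ):ℝ) * ρ * π / m) = Real.cos (ρ * π / m) := by
  obtain ⟨e, he⟩ := hdvd
  have hm0 : (m:ℝ) ≠ 0 := Nat.cast_ne_zero.mpr hm.ne'
  have : ((1 + c' : ℕ):ℝ) * ρ * π / m = ρ*π/m + ((e*ρ : ℕ):ℤ) * (2*π) := by
    subst he; push_cast; field_simp
  rw [this, Real.cos_add_int_mul_two_pi]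

lemma coprime_of_no_prime {a b : ℕ} (h : ∀ q : ℕ, q.Prime → q ∣ a → q ∣ b → False) :
    Nat.Coprime a b := by
  by_contra hc
  have hp := Nat.minFac_prime hc
  exact h _ hp ((Nat.minFac_dvd _).trans (Nat.gcd_dvd_left a b))
    ((Nat.minFac_dvd _).trans (Nat.gcd_dvd_right a b))

lemma key_lemma {k : ℕ} (p : Fin k → ℕ) (hp : ∀ i, (p i).Prime) (hp5 : ∀ i, 5 ≤ p i)
    (hdist : Function.Injective p)
    (m : Fin k → ℕ) (hm : ∀ i, m i = p i ∨ m i = 2 * p i)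
    (r r' : Fin k → ℕ)
    (hr1 : ∀ i, 1 ≤ r i) (hr2 : ∀ i, r i + 1 ≤ m i)
    (hr1' : ∀ i, 1 ≤ r' i) (hr2' : ∀ i, r' i + 1 ≤ m i)
    (hsum : ∑ i, 2 * Real.cos (r i * π / m i) = ∑ i, 2 * Real.cos (r' i * π / m i))
    (i : Fin k) :
    ∃ z : ℤ, (z:ℝ) = 2 * Real.cos (r i * π / m i) - 2 * Real.cos (r' i * π / m i) ∧
      |z| * ((p i : ℤ) - 1) ≤ 4 := by
  have hm_pos : ∀ j, 0 < m j := by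
    intro j; rcases hm j with h | h <;> (rw [h]) <;> have := hp5 j <;> omega
  have hppos : 0 < p i := by have := hp5 i; omega
  set N : ℕ := 4 * ∏ j, p j with hNdef
  have hNpos : 0 < N := by
    have : 0 < ∏ j, p j := Finset.prod_pos (fun j _ => by have := hp5 j; omega)
    omega
  have hdvdN : ∀ j, 2 * m j ∣ N := by
    intro j
    have hpd : p j ∣ ∏ l, p l := Finset.dvd_prod_of_mem p (Finset.mem_univ j)
    obtain ⟨e, he⟩ := hpd
    rcases hm j with h | h
    · exact ⟨2*e, by rw [h, hNdef, he]; ring⟩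
    · exact ⟨e, by rw [h, hNdef, he]; ring⟩
  set P' : ℕ := ∏ j ∈ Finset.univ.erase i, p j with hP'def
  set Qn : ℕ := 4 * P' with hQdef
  have hQN : Qn * p i = N := by
    rw [hQdef, hNdef, hP'def, ← Finset.mul_prod_erase Finset.univ p (Finset.mem_univ i)]
    ring
  have hpP' : ¬ p i ∣ P' := by
    intro hd
    obtain ⟨j, hj, hdd⟩ := (hp i).prime.exists_mem_finset_dvd hd
    have : p i = p j := (Nat.prime_dvd_prime_iff_eq (hp i) (hp j)).mp hdd
    have : i = j := hdist this
    rw [this] at hj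
    exact (Finset.mem_erase.mp hj).1 rfl
  have hpQ : ¬ p i ∣ Qn := by
    intro hd
    rcases (Nat.Prime.dvd_mul (hp i)).mp hd with h4 | hP
    · have := Nat.le_of_dvd (by norm_num) h4; have := hp5 i; omega
    · exact hpP' hP
  obtain ⟨c, hc, hpc⟩ : ∃ c, 2 * m i * c = N ∧ ¬ p i ∣ c := by
    rcases hm i with h | h
    · refine ⟨2 * P', by rw [h, ← hQN, hQdef]; ring, ?_⟩
      intro hd
      rcases (Nat.Prime.dvd_mul (hp i)).mp hd with h2 | hP
      · have := Nat.le_of_dvd (by norm_num) h2; have := hp5 i; omega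
      · exact hpP' hP
    · exact ⟨P', by rw [h, ← hQN, hQdef]; ring, hpP'⟩
  haveI : Fact (p i).Prime := ⟨hp i⟩
  have hQZ : (Qn : ZMod (p i)) ≠ 0 := by
    rw [Ne, ZMod.natCast_eq_zero_iff]
    exact hpQ
  set s₀ : ℕ := (- (Qn : ZMod (p i))⁻¹).val with hs₀def
  have hs₀lt : s₀ < p i := ZMod.val_lt _
  have hs₀dvd : p i ∣ 1 + s₀ * Qn := by
    rw [← ZMod.natCast_eq_zero_iff]
    push_cast
    rw [hs₀def, ZMod.natCast_rightInverse _]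
    rw [neg_mul, inv_mul_cancel₀ hQZ]
    ring
  have huniq : ∀ s, s < p i → p i ∣ 1 + s * Qn → s = s₀ := by
    intro s hs hdvd
    have h1 : ((1 + s * Qn : ℕ) : ZMod (p i)) = 0 := by
      rw [ZMod.natCast_eq_zero_iff]; exact hdvd
    have h2 : ((1 + s₀ * Qn : ℕ) : ZMod (p i)) = 0 := by
      rw [ZMod.natCast_eq_zero_iff]; exact hs₀dvd
    push_cast at h1 h2
    have h3 : (s : ZMod (p i)) * Qn = (s₀ : ZMod (p i)) * Qn := by
      have := h1.trans h2.symm; linear_combination this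
    have h4 : (s : ZMod (p i)) = (s₀ : ZMod (p i)) := mul_right_cancel₀ hQZ h3
    have := congrArg ZMod.val h4
    rwa [ZMod.val_cast_of_lt hs, ZMod.val_cast_of_lt hs₀lt] at this
  have hcop : ∀ s, s < p i → s ≠ s₀ → Nat.Coprime (1 + s * Qn) N := by
    intro s hs hne
    apply coprime_of_no_prime
    intro q hq hqa hqb
    rw [← hQN] at hqb
    rcases (Nat.Prime.dvd_mul hq).mp hqb with hQ | hpi
    · have h2 : q ∣ s * Qn := Dvd.dvd.mul_left hQ s
      have h3 : q ∣ 1 := by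
        have := Nat.dvd_sub hqa h2
        simpa using this
      exact (Nat.Prime.one_lt hq).ne' (Nat.dvd_one.mp h3)
    · have : q = p i := (Nat.prime_dvd_prime_iff_eq hq (hp i)).mp hpi
      rw [this] at hqa
      exact hne (huniq s hs hqa)
  -- constancy of the difference under conjugation
  set d : ℝ := 2 * Real.cos (r i * π / m i) - 2 * Real.cos (r' i * π / m i) with hddef
  have hQdvd : ∀ j, j ≠ i → 2 * m j ∣ Qn := by
    intro j hj
    have hpd : p j ∣ P' :=
      Finset.dvd_prod_of_mem p (Finset.mem_erase.mpr ⟨hj, Finset.mem_univ j⟩)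
    obtain ⟨e, he⟩ := hpd
    rcases hm j with h | h
    · exact ⟨2*e, by rw [h, hQdef, he]; ring⟩
    · exact ⟨e, by rw [h, hQdef, he]; ring⟩
  have hFconst : ∀ s, s < p i → s ≠ s₀ →
      2 * Real.cos (((1 + s * Qn : ℕ):ℝ) * r i * π / m i)
      - 2 * Real.cos (((1 + s * Qn : ℕ):ℝ) * r' i * π / m i) = d := by
    intro s hs hne
    have hstar := star_lemma hNpos m hm_pos hdvdN r r'
      (fun j => by have := hr2 j; omega) (fun j => by have := hr2' j; omega)
      hsum (1 + s * Qn) (hcop s hs hne)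
    have hshift : ∀ ρ : Fin k → ℕ, ∀ j ∈ Finset.univ.erase i,
        2 * Real.cos (((1 + s * Qn : ℕ):ℝ) * ρ j * π / m j)
        = 2 * Real.cos (ρ j * π / m j) := by
      intro ρ j hj
      have hj' : j ≠ i := (Finset.mem_erase.mp hj).1
      have : 2 * m j ∣ s * Qn := Dvd.dvd.mul_left (hQdvd j hj') s
      rw [cos_shift (hm_pos j) this]
    rw [← Finset.add_sum_erase _ _ (Finset.mem_univ i),
        ← Finset.add_sum_erase _ _ (Finset.mem_univ i)] at hstar
    rw [Finset.sum_congr rfl (hshift r), Finset.sum_congr rfl (hshift r')] at hstar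
    have hsum2 := hsum
    rw [← Finset.add_sum_erase _ _ (Finset.mem_univ i),
        ← Finset.add_sum_erase _ _ (Finset.mem_univ i)] at hsum2
    rw [hddef]
    push_cast at hstar ⊢
    linarith
  -- the geometric (full trace) sum vanishes
  have hT0 : ∀ ρ : ℕ, 1 ≤ ρ → ρ + 1 ≤ m i →
      ∑ s ∈ Finset.range (p i), 2 * Real.cos (((1 + s * Qn : ℕ):ℝ) * ρ * π / m i) = 0 := by
    intro ρ hρ1 hρ2
    have hm0 : (m i : ℝ) ≠ 0 := Nat.cast_ne_zero.mpr (hm_pos i).ne'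
    by_cases hpρ : p i ∣ ρ
    -- special case: ρ = p i, m i = 2 * p i, every term vanishes
    · have hρp : ρ = p i := by
        rcases hm i with h | h
        · exfalso; have := Nat.le_of_dvd (by omega) hpρ; omega
        · obtain ⟨e, he⟩ := hpρ
          rw [h] at hρ2
          rcases Nat.eq_zero_or_pos e with h0 | h1
          · subst h0; omega
          · have h2 : e < 2 := by
              by_contra hh
              push_neg at hh
              have : p i * 2 ≤ p i * e := Nat.mul_le_mul_left _ hh
              omega
            have he1 : e = 1 := by omega
            subst he1; omega
      have hmi : m i = 2 * p i := by
        rcases hm i with h | h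
        · exfalso; rw [h] at hρ2; omega
        · exact h
      apply Finset.sum_eq_zero
      intro s _
      have hangle : ((1 + s * Qn : ℕ):ℝ) * ρ * π / m i
          = ((2 * (2 * s * P') + 1 : ℕ):ℝ) * (π/2) := by
        rw [hρp, hmi, hQdef]
        have hp0 : (p i : ℝ) ≠ 0 := Nat.cast_ne_zero.mpr hppos.ne'
        push_cast
        field_simp
        ring
      rw [hangle, cos_odd_half_pi]
      norm_num
    · -- generic case: geometric sum
      have hterm : ∀ s ∈ Finset.range (p i),
          2 * Real.cos (((1 + s * Qn : ℕ):ℝ) * ρ * π / m i)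
          = 2 * Real.cos ((ρ * π / m i : ℝ) + s * ((Qn : ℝ) * ρ * π / m i)) := by
        intro s _
        congr 1
        push_cast
        field_simp
      rw [Finset.sum_congr rfl hterm]
      apply sum_two_cos_zero
      · rw [← Complex.exp_nat_mul]
        have h1 : (Qn : ℂ) * (p i : ℂ) = 2 * (m i : ℂ) * (c : ℂ) := by
          have : Qn * p i = 2 * m i * c := by rw [hQN, hc]
          exact_mod_cast congrArg (Nat.cast (R := ℂ)) this
        have hm0' : (m i : ℂ) ≠ 0 := Nat.cast_ne_zero.mpr (hm_pos i).ne'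
        have hform : ((p i : ℕ):ℂ) * ((((Qn : ℝ) * ρ * π / m i : ℝ):ℂ) * Complex.I)
            = ((c * ρ : ℕ):ℂ) * (2 * (π:ℂ) * Complex.I) := by
          push_cast
          field_simp
          first
          | linear_combination (-(ρ:ℂ) * (π:ℂ) * Complex.I) * h1
          | linear_combination ((ρ:ℂ) * (π:ℂ) * Complex.I) * h1
          | linear_combination (2*(ρ:ℂ) * (π:ℂ) * Complex.I) * h1
          | linear_combination (-2*(ρ:ℂ) * (π:ℂ) * Complex.I) * h1
          | linear_combination (ρ:ℂ) * h1
        rw [hform]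
        exact Complex.exp_nat_mul_two_pi_mul_I (c * ρ)
      · intro h1
        obtain ⟨w, hw⟩ := Complex.exp_eq_one_iff.mp h1
        have hw2 : (((Qn : ℝ) * ρ * π / m i : ℝ):ℂ) = (w:ℂ) * (2 * (π:ℂ)) := by
          have h' : (((Qn : ℝ) * ρ * π / m i : ℝ):ℂ) * Complex.I
              = ((w:ℂ) * (2 * (π:ℂ))) * Complex.I := by rw [hw]; ring
          exact mul_right_cancel₀ Complex.I_ne_zero h'
        have hw3 : ((Qn : ℝ) * ρ * π / m i : ℝ) = (w:ℝ) * (2 * π) := by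
          exact_mod_cast hw2
        have hw4 : (Qn : ℝ) * ρ = (w:ℝ) * (2 * m i) := by
          apply mul_right_cancel₀ Real.pi_ne_zero
          field_simp at hw3
          linear_combination (π:ℝ) * hw3
        have hw5 : (Qn * ρ : ℤ) = w * (2 * m i) := by exact_mod_cast hw4
        have hdvd2 : (2 * m i : ℕ) ∣ Qn * ρ := by
          have hzz0 : ((Qn * ρ : ℕ) : ℤ) = ((2 * m i : ℕ) : ℤ) * w := by
            push_cast
            linarith [hw5]
          have hzz : ((2 * m i : ℕ) : ℤ) ∣ ((Qn * ρ : ℕ) : ℤ) := ⟨w, hzz0⟩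
          exact_mod_cast hzz
        obtain ⟨e, he⟩ := hdvd2
        have hce : c * ρ = e * p i := by
          have h1' : Qn * ρ * p i = 2 * m i * e * p i := by rw [he]
          have h2' : Qn * p i * ρ = 2 * m i * (c * ρ) := by rw [hQN, ← hc]; ring
          have : 2 * m i * (c * ρ) = 2 * m i * (e * p i) := by
            calc 2 * m i * (c * ρ) = Qn * p i * ρ := h2'.symm
              _ = 2 * m i * e * p i := by rw [← h1']; ring
              _ = 2 * m i * (e * p i) := by ring
          exact Nat.eq_of_mul_eq_mul_left (by have := hm_pos i; omega) this
        have : p i ∣ c * ρ := ⟨e, by rw [hce]; ring⟩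
        rcases (Nat.Prime.dvd_mul (hp i)).mp this with h | h
        · exact hpc h
        · exact hpρ h
  -- combine vanishing trace with constancy
  have hs0mem : s₀ ∈ Finset.range (p i) := Finset.mem_range.mpr hs₀lt
  set G : ℕ → ℝ := fun s => 2 * Real.cos (((1 + s * Qn : ℕ):ℝ) * r i * π / m i)
      - 2 * Real.cos (((1 + s * Qn : ℕ):ℝ) * r' i * π / m i) with hGdef
  have hsumG : ∑ s ∈ Finset.range (p i), G s = 0 := by
    simp only [hGdef]
    rw [Finset.sum_sub_distrib]
    rw [hT0 (r i) (hr1 i) (hr2 i), hT0 (r' i) (hr1' i) (hr2' i), sub_zero]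
  have hsplit : ∑ s ∈ Finset.range (p i), G s
      = G s₀ + ∑ s ∈ (Finset.range (p i)).erase s₀, G s :=
    (Finset.add_sum_erase _ _ hs0mem).symm
  have herase : ∑ s ∈ (Finset.range (p i)).erase s₀, G s = ((p i - 1 : ℕ):ℝ) * d := by
    have hcongr : ∀ s ∈ (Finset.range (p i)).erase s₀, G s = d := by
      intro s hs
      obtain ⟨hne, hmem⟩ := Finset.mem_erase.mp hs
      exact hFconst s (Finset.mem_range.mp hmem) hne
    rw [Finset.sum_congr rfl hcongr, Finset.sum_const, Finset.card_erase_of_mem hs0mem,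
        Finset.card_range, nsmul_eq_mul]
  have hkey : G s₀ + ((p i - 1 : ℕ):ℝ) * d = 0 := by
    rw [← herase, ← hsplit, hsumG]
  -- integer values at s₀
  obtain ⟨w, hw⟩ := hs₀dvd
  have hangle : ∀ ρ : ℕ, ∃ kk : ℕ, ((1 + s₀ * Qn : ℕ):ℝ) * ρ * π / m i = (kk:ℝ) * (π/2) := by
    intro ρ
    have hp0 : (p i:ℝ) ≠ 0 := Nat.cast_ne_zero.mpr hppos.ne'
    rcases hm i with h | h
    · refine ⟨2 * w * ρ, ?_⟩
      rw [hw, h]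
      push_cast
      field_simp
    · refine ⟨w * ρ, ?_⟩
      rw [hw, h]
      push_cast
      field_simp
  obtain ⟨k1, hk1⟩ := hangle (r i)
  obtain ⟨k2, hk2⟩ := hangle (r' i)
  obtain ⟨z1, hz1b, hz1⟩ := exists_int_two_cos_half k1
  obtain ⟨z2, hz2b, hz2⟩ := exists_int_two_cos_half k2
  have hGval : G s₀ = (z1:ℝ) - (z2:ℝ) := by
    simp only [hGdef]
    rw [hk1, hk2, ← hz1, ← hz2]
  have h5r : (5:ℝ) ≤ (p i : ℝ) := by exact_mod_cast hp5 i
  have hpm1 : ((p i - 1 : ℕ):ℝ) = (p i:ℝ) - 1 := by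
    have : 1 ≤ p i := by omega
    push_cast [Nat.cast_sub this]
    ring
  set e : ℤ := z2 - z1 with hedef
  have hde : ((p i:ℝ) - 1) * d = (e:ℝ) := by
    rw [hedef]
    push_cast
    rw [hpm1] at hkey
    linarith [hkey, hGval]
  have hne1 : ((p i:ℝ) - 1) ≠ 0 := by linarith
  set qq : ℚ := (e : ℚ) / ((p i:ℚ) - 1) with hqqdef
  have hq : ((qq : ℚ) : ℝ) = d := by
    rw [hqqdef]
    push_cast
    rw [eq_comm, eq_div_iff (by exact_mod_cast hne1)]
    linarith [hde]
  have hdint : IsIntegral ℤ d := by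
    rw [hddef]
    exact (isIntegral_two_cos (r i) (m i) (hm_pos i)).sub
      (isIntegral_two_cos (r' i) (m i) (hm_pos i))
  obtain ⟨z, hz⟩ := rat_of_integral d qq hdint hq
  refine ⟨z, ?_, ?_⟩
  · have hzr : ((z:ℚ):ℝ) = d := by rw [hz]; exact hq
    rw [hddef] at hzr
    exact_mod_cast hzr
  · have hne1q : ((p i:ℚ) - 1) ≠ 0 := by
      intro hh
      apply hne1
      exact_mod_cast hh
    have hzq : (z:ℚ) * ((p i:ℚ) - 1) = (e:ℚ) := by
      rw [hz, hqqdef, div_mul_cancel₀ _ hne1q]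
    have hzint : z * ((p i:ℤ) - 1) = e := by exact_mod_cast hzq
    have hpos1 : (0:ℤ) ≤ (p i:ℤ) - 1 := by
      have : (5:ℤ) ≤ (p i:ℤ) := by exact_mod_cast hp5 i
      omega
    have habs : |z| * ((p i:ℤ) - 1) = |e| := by
      rw [← hzint, abs_mul, abs_of_nonneg hpos1]
    rw [habs, hedef]
    have h1 := abs_le.mp hz1b
    have h2 := abs_le.mp hz2b
    rw [abs_le]
    omega

theorem stmt6 (k : ℕ) (hk : 1 ≤ k) (p : Fin k → ℕ)
    (hp : ∀ i, (p i).Prime) (hp5 : ∀ i, 5 ≤ p i)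
    (hdist : Function.Injective p)
    (n : Fin k → ℕ) (hn : ∀ i, n i = p i - 1 ∨ n i = 2 * p i - 1)
    (r r' : Fin k → ℕ)
    (hr : ∀ i, 1 ≤ r i ∧ r i ≤ n i) (hr' : ∀ i, 1 ≤ r' i ∧ r' i ≤ n i)
    (hsum : ∑ i, 2 * Real.cos (r i * π / (n i + 1)) =
            ∑ i, 2 * Real.cos (r' i * π / (n i + 1))) :
    ∀ i, 2 * Real.cos (r i * π / (n i + 1)) = 2 * Real.cos (r' i * π / (n i + 1)) := by
  have hcast : ∀ i : Fin k, ((n i : ℝ) + 1) = ((n i + 1 : ℕ):ℝ) := by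
    intro i; push_cast; ring
  simp only [hcast] at hsum ⊢
  have hm : ∀ i, n i + 1 = p i ∨ n i + 1 = 2 * p i := by
    intro i
    have h5 := hp5 i
    rcases hn i with h | h
    · left; omega
    · right; omega
  have key := fun i => key_lemma p hp hp5 hdist (fun i => n i + 1) hm r r'
      (fun j => (hr j).1) (fun j => by show r j + 1 ≤ n j + 1; have := (hr j).2; omega)
      (fun j => (hr' j).1) (fun j => by show r' j + 1 ≤ n j + 1; have := (hr' j).2; omega) hsum i
  choose z hz hzb using key
  have hzsum : ∑ i, z i = 0 := by
    have h1 : ((∑ i, z i : ℤ):ℝ) = 0 := by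
      push_cast
      rw [Finset.sum_congr rfl (fun i _ => hz i), Finset.sum_sub_distrib, hsum, sub_self]
    exact_mod_cast h1
  have hp57 : ∀ j, p j = 5 ∨ 7 ≤ p j := by
    intro j
    have h5 := hp5 j
    by_contra hcon
    push_neg at hcon
    obtain ⟨hne5, hlt7⟩ := hcon
    have h6 : p j = 6 := by omega
    have := hp j
    rw [h6] at this
    norm_num at this
  have hbig : ∀ j, 7 ≤ p j → z j = 0 := by
    intro j h7
    have hb := hzb j
    have h7' : (7:ℤ) ≤ (p j:ℤ) := by exact_mod_cast h7
    by_contra hzne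
    have h0 : 0 < |z j| := abs_pos.mpr hzne
    have h1 : 1 ≤ |z j| := by exact h0
    have h6 : 1 * 6 ≤ |z j| * ((p j:ℤ) - 1) :=
      mul_le_mul h1 (by linarith) (by norm_num) (abs_nonneg _)
    linarith
  intro i
  have hzi : z i = 0 := by
    rcases hp57 i with h5 | h7
    · have hothers : ∀ j ∈ Finset.univ.erase i, z j = 0 := by
        intro j hj
        have hji : j ≠ i := (Finset.mem_erase.mp hj).1
        rcases hp57 j with h5' | h7'
        · exact absurd (hdist (h5'.trans h5.symm)) hji
        · exact hbig j h7'
      have hzsum2 : ∑ j, z j = z i := by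
        rw [← Finset.add_sum_erase _ _ (Finset.mem_univ i),
            Finset.sum_eq_zero hothers, add_zero]
      omega
    · exact hbig i h7
  have hfin := hz i
  rw [hzi] at hfin
  simp only [Int.cast_zero] at hfin
  linarith
end

section
/- Let ω = e^{iπ/2^e} with e ≥ 1 and let r, s ∈ {1, ..., 2^e - 1} be exactly divisible by the same power 2^d of 2, with d < e. If (ω^r + ω^{-r}) - (ω^s + ω^{-s}) is a nonzero rational number, then a contradiction follows; i.e., (ω^r + ω^{-r}) - (ω^s + ω^{-s}) is either zero or irrational. -/
open Real

theorem stmt9 (e d : ℕ) (he : 1 ≤ e) (hde : d < e)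
    (r s : ℕ) (hr : 1 ≤ r ∧ r ≤ 2 ^ e - 1) (hs : 1 ≤ s ∧ s ≤ 2 ^ e - 1)
    (hrd : 2 ^ d ∣ r ∧ ¬ 2 ^ (d + 1) ∣ r)
    (hsd : 2 ^ d ∣ s ∧ ¬ 2 ^ (d + 1) ∣ s)
    (q : ℚ)
    (hq : 2 * Real.cos (r * π / 2 ^ e) - 2 * Real.cos (s * π / 2 ^ e) = q) :
    q = 0 := by
  obtain ⟨hr1, hr2⟩ := hr
  obtain ⟨hs1, hs2⟩ := hs
  obtain ⟨hrd1, hrd2⟩ := hrd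
  obtain ⟨hsd1, hsd2⟩ := hsd
  set n := e - d with hn
  have hed : e = d + n := by omega
  have hn1 : 1 ≤ n := by omega
  obtain ⟨r', hr'⟩ := hrd1
  obtain ⟨s', hs'⟩ := hsd1
  have h2e : (0:ℕ) < 2 ^ e := Nat.pow_pos (by norm_num)
  have h2d : (0:ℕ) < 2 ^ d := Nat.pow_pos (by norm_num)
  have h2n : (0:ℕ) < 2 ^ n := Nat.pow_pos (by norm_num)
  have hro : ¬ (2 ∣ r') := by
    intro ⟨k, hk⟩
    exact hrd2 ⟨k, by rw [hr', hk]; ring⟩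
  have hso : ¬ (2 ∣ s') := by
    intro ⟨k, hk⟩
    exact hsd2 ⟨k, by rw [hs', hk]; ring⟩
  have hr'1 : 1 ≤ r' := by
    rcases Nat.eq_zero_or_pos r' with h | h
    · subst h; simp at hr'; omega
    · exact h
  have hs'1 : 1 ≤ s' := by
    rcases Nat.eq_zero_or_pos s' with h | h
    · subst h; simp at hs'; omega
    · exact h
  have hr'lt : r' < 2 ^ n := by
    by_contra h
    push_neg at h
    have : 2 ^ e ≤ r := by
      rw [hr', hed, pow_add]
      exact Nat.mul_le_mul_left _ h
    omega
  have hs'lt : s' < 2 ^ n := by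
    by_contra h
    push_neg at h
    have : 2 ^ e ≤ s := by
      rw [hs', hed, pow_add]
      exact Nat.mul_le_mul_left _ h
    omega
  -- the primitive 2^(n+1)-th root of unity
  set N : ℕ := 2 ^ (n + 1) with hN
  have hNpos : 0 < N := Nat.pow_pos (by norm_num)
  set ζ : ℂ := Complex.exp (2 * ↑π * Complex.I / N) with hζdef
  have hζ : IsPrimitiveRoot ζ N := Complex.isPrimitiveRoot_exp N hNpos.ne'
  have hNC : (N:ℂ) = 2 * (2:ℂ) ^ n := by
    rw [hN]; push_cast [pow_succ]; ring
  have h2nCne : ((2:ℂ) ^ n) ≠ 0 := by norm_num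
  -- ζ ^ k = exp (k * π * I / 2 ^ n)
  have hpow : ∀ k : ℕ, ζ ^ k = Complex.exp (k * ↑π * Complex.I / 2 ^ n) := by
    intro k
    rw [hζdef, ← Complex.exp_nat_mul]
    congr 1
    rw [hNC]
    field_simp
  -- key identity: ζ^k - ζ^(2^n - k) = 2 cos (k π / 2^n) for k < 2^n
  have hkey : ∀ k : ℕ, k < 2 ^ n →
      ζ ^ k - ζ ^ (2 ^ n - k) = 2 * Real.cos (k * π / 2 ^ n) := by
    intro k hk
    rw [hpow, hpow]
    have hcast : ((2 ^ n - k : ℕ) : ℂ) = (2:ℂ) ^ n - k := by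
      push_cast [Nat.cast_sub hk.le]; ring
    rw [hcast]
    have hsplit : ((2:ℂ) ^ n - k) * ↑π * Complex.I / 2 ^ n
        = ↑π * Complex.I + (-(k * ↑π * Complex.I / 2 ^ n)) := by
      field_simp
      ring
    rw [hsplit, Complex.exp_add, Complex.exp_pi_mul_I]
    rw [Complex.ofReal_cos, Complex.two_cos,
      show ((k * π / 2 ^ n : ℝ) : ℂ) * Complex.I = (k:ℂ) * ↑π * Complex.I / 2 ^ n from by
        push_cast; ring,
      show -((k * π / 2 ^ n : ℝ) : ℂ) * Complex.I = -((k:ℂ) * ↑π * Complex.I / 2 ^ n) from by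
        push_cast; ring]
    ring
  -- rewrite the angles
  have hangr : (r : ℝ) * π / 2 ^ e = r' * π / 2 ^ n := by
    rw [hr', hed, pow_add]
    push_cast
    field_simp
  have hangs : (s : ℝ) * π / 2 ^ e = s' * π / 2 ^ n := by
    rw [hs', hed, pow_add]
    push_cast
    field_simp
  -- the polynomial
  set p : Polynomial ℚ := Polynomial.X ^ r' - Polynomial.X ^ (2 ^ n - r')
      - Polynomial.X ^ s' + Polynomial.X ^ (2 ^ n - s') - Polynomial.C q with hp
  have haeval : Polynomial.aeval ζ p = 0 := by
    rw [hp]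
    simp only [map_sub, map_add, map_pow, Polynomial.aeval_X, Polynomial.aeval_C]
    have e1 := hkey r' hr'lt
    have e2 := hkey s' hs'lt
    have hq' : 2 * Real.cos ((r':ℝ) * π / 2 ^ n) - 2 * Real.cos ((s':ℝ) * π / 2 ^ n)
        = (q : ℝ) := by
      rw [← hangr, ← hangs]; exact hq
    have hqC : (2:ℂ) * (Real.cos ((r':ℝ) * π / 2 ^ n) : ℂ)
        - 2 * (Real.cos ((s':ℝ) * π / 2 ^ n) : ℂ) = (q : ℂ) := by
      exact_mod_cast hq'
    rw [eq_ratCast (algebraMap ℚ ℂ) q]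
    linear_combination e1 - e2 + hqC
  have hmin : minpoly ℚ ζ = Polynomial.cyclotomic N ℚ :=
    (Polynomial.cyclotomic_eq_minpoly_rat hζ hNpos).symm
  have hmindeg : (minpoly ℚ ζ).natDegree = 2 ^ n := by
    rw [hmin, Polynomial.natDegree_cyclotomic, hN,
      Nat.totient_prime_pow Nat.prime_two (Nat.succ_pos n)]
    simp
  -- p = 0
  have hp0 : p = 0 := by
    by_contra hne
    have hdvd : minpoly ℚ ζ ∣ p := minpoly.dvd ℚ ζ haeval
    have hle : (minpoly ℚ ζ).natDegree ≤ p.natDegree :=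
      Polynomial.natDegree_le_of_dvd hdvd hne
    have hlt : p.natDegree < 2 ^ n := by
      have hb : ∀ k : ℕ, k < 2 ^ n → ((Polynomial.X : Polynomial ℚ) ^ k).natDegree < 2 ^ n := by
        intro k hk; rw [Polynomial.natDegree_X_pow]; exact hk
      calc p.natDegree ≤ _ := Polynomial.natDegree_sub_le _ _
        _ < 2 ^ n := by
          apply max_lt
          · apply lt_of_le_of_lt (Polynomial.natDegree_add_le _ _)
            apply max_lt
            · apply lt_of_le_of_lt (Polynomial.natDegree_sub_le _ _)
              apply max_lt
              · apply lt_of_le_of_lt (Polynomial.natDegree_sub_le _ _)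
                exact max_lt (hb _ hr'lt) (hb _ (by omega))
              · exact hb _ hs'lt
            · exact hb _ (by omega)
          · rw [Polynomial.natDegree_C]; exact h2n
    omega
  have hc0 : p.coeff 0 = 0 := by rw [hp0]; simp
  rw [hp] at hc0
  simp only [Polynomial.coeff_sub, Polynomial.coeff_add, Polynomial.coeff_X_pow,
    Polynomial.coeff_C] at hc0
  have h1 : ¬ ((0:ℕ) = r') := by omega
  have h2 : ¬ ((0:ℕ) = 2 ^ n - r') := fun h => (Nat.sub_ne_zero_of_lt hr'lt) h.symm
  have h3 : ¬ ((0:ℕ) = s') := by omega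
  have h4 : ¬ ((0:ℕ) = 2 ^ n - s') := fun h => (Nat.sub_ne_zero_of_lt hs'lt) h.symm
  rw [if_neg h1, if_neg h2, if_neg h3, if_neg h4] at hc0
  simpa using hc0
end

section
/- Let p ≡ 1 (mod 8) be prime and α_r = 2cos(rπ/p) for r = 1, ..., p-1. Suppose integers a_1, ..., a_{p-1} and s satisfy Σ_{r=1}^{p-1} a_r α_r = s and Σ_{r=1}^{p-1} a_r = 0. Then Σ_{r even} a_r is even. -/
open Real Finset Polynomial

lemma aux_conj (p : ℕ) (hp : 0 < p) (ζ : ℂ)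
    (hprim : IsPrimitiveRoot ζ (2*p)) (Q : Polynomial ℚ) (hQ : Polynomial.aeval ζ Q = 0)
    (j : ℕ) (hj : j.Coprime (2*p)) : Polynomial.aeval (ζ^j) Q = 0 := by
  have h2p : 0 < 2*p := by omega
  have hdvd : minpoly ℚ ζ ∣ Q := minpoly.dvd ℚ ζ hQ
  rw [← Polynomial.cyclotomic_eq_minpoly_rat hprim h2p] at hdvd
  obtain ⟨R, hR⟩ := hdvd
  have hprimj : IsPrimitiveRoot (ζ^j) (2*p) := hprim.pow_of_coprime j hj
  have hz : Polynomial.aeval (ζ^j) (Polynomial.cyclotomic (2*p) ℚ) = 0 := by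
    have : NeZero (2*p) := ⟨by omega⟩
    have := (Polynomial.isRoot_cyclotomic_iff (R := ℂ) (n := 2*p)).2 hprimj
    rw [Polynomial.IsRoot] at this
    rw [Polynomial.aeval_def, Polynomial.eval₂_eq_eval_map, Polynomial.map_cyclotomic]
    exact this
  rw [hR, map_mul, hz, zero_mul]

lemma aux_geom (p : ℕ) (hpo : p % 2 = 1) (ζ : ℂ) (hprim : IsPrimitiveRoot ζ (2*p))
    (m : ℕ) (hm : ¬ p ∣ m) :
    ∑ k ∈ (Finset.range p).erase ((p-1)/2), (ζ^m)^(2*k+1) = -(-1)^m := by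
  have hp0 : 0 < p := by omega
  have hmem : (p-1)/2 ∈ Finset.range p := by
    simp only [Finset.mem_range]; omega
  have hpe : 2*((p-1)/2)+1 = p := by omega
  have hzp : ζ^p = -1 := by
    have h1 : (ζ^p)^2 = 1 := by
      rw [← pow_mul]
      exact (hprim.pow_eq_one_iff_dvd (p*2)).2 ⟨1, by ring⟩
    have h2 : ζ^p ≠ 1 := by
      intro h
      have := Nat.le_of_dvd hp0 ((hprim.pow_eq_one_iff_dvd p).1 h)
      omega
    have h3 : (ζ^p - 1) * (ζ^p + 1) = 0 := by linear_combination h1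
    rcases mul_eq_zero.1 h3 with h | h
    · exact absurd (by linear_combination h) h2
    · linear_combination h
  have h2 : (ζ^m)^2 ≠ 1 := by
    rw [← pow_mul]
    intro h
    obtain ⟨c, hc⟩ := (hprim.pow_eq_one_iff_dvd (m*2)).1 h
    rw [mul_assoc] at hc
    exact hm ⟨c, by omega⟩
  have h3 : ((ζ^m)^2)^p = 1 := by
    have he : ((ζ^m)^2)^p = (ζ^(2*p))^m := by
      rw [← pow_mul, ← pow_mul, ← pow_mul]
      congr 1
      ring
    rw [he, hprim.pow_eq_one, one_pow]
  have h4 : (ζ^m)^p = (-1)^m := by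
    rw [← pow_mul, mul_comm m p, pow_mul, hzp]
  set w := ζ^m with hw
  clear_value w
  rw [Finset.sum_erase_eq_sub hmem, hpe, h4]
  have hsum : ∑ k ∈ Finset.range p, w^(2*k+1) = 0 := by
    have hterm : ∀ k ∈ Finset.range p, w^(2*k+1) = (w^2)^k * w := by
      intro k _
      rw [← pow_mul, ← pow_succ]
    rw [Finset.sum_congr rfl hterm, ← Finset.sum_mul, geom_sum_eq h2, h3, sub_self,
      zero_div, zero_mul]
  rw [hsum, zero_sub]

theorem stmt13 (p : ℕ) (hp : p.Prime) (hp8 : p % 8 = 1) (a : ℕ → ℤ) (s : ℤ)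
    (h1 : ∑ r ∈ Finset.Icc 1 (p - 1),
        (a r : ℝ) * (2 * Real.cos (r * π / p)) = s)
    (h2 : ∑ r ∈ Finset.Icc 1 (p - 1), a r = 0) :
    Even (∑ r ∈ (Finset.Icc 1 (p - 1)).filter (fun r => Even r), a r) := by
  have hp2 := hp.two_le
  have hp9 : 9 ≤ p := by omega
  have hpc0 : (p:ℂ) ≠ 0 := Nat.cast_ne_zero.2 (by omega)
  set ζ : ℂ := Complex.exp (2 * ↑π * Complex.I / (↑(2*p) : ℂ)) with hζdef
  have hprim : IsPrimitiveRoot ζ (2*p) := Complex.isPrimitiveRoot_exp (2*p) (by omega)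
  have hζm : ∀ m : ℕ, ζ^m = Complex.exp ((m : ℂ) * (↑π * Complex.I / ↑p)) := by
    intro m
    rw [hζdef, ← Complex.exp_nat_mul]
    congr 1
    push_cast
    field_simp
  have hcos : ∀ r : ℕ, r ∈ Finset.Icc 1 (p-1) →
      ((2 * Real.cos (r * π / p) : ℝ) : ℂ) = ζ^r + ζ^(2*p - r) := by
    intro r hr
    simp only [Finset.mem_Icc] at hr
    have hr2p : r ≤ 2*p := by omega
    have e1 : ζ^r = Complex.exp (((r:ℂ) * ↑π / ↑p) * Complex.I) := by
      rw [hζm]; congr 1; ring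
    have e2 : ζ^(2*p - r) = Complex.exp (-(((r:ℂ) * ↑π / ↑p) * Complex.I)) := by
      rw [hζm]
      rw [show ((2*p - r : ℕ):ℂ) * (↑π * Complex.I / ↑p)
          = 2*↑π*Complex.I + -(((r:ℂ) * ↑π / ↑p) * Complex.I) by
        push_cast [Nat.cast_sub hr2p]
        field_simp
        ring]
      rw [Complex.exp_add, Complex.exp_two_pi_mul_I, one_mul]
    rw [e1, e2]
    push_cast
    rw [Complex.exp_mul_I, ← neg_mul, Complex.exp_mul_I]
    simp [Complex.cos_neg, Complex.sin_neg]
    ring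
  have hc : ∑ r ∈ Finset.Icc 1 (p-1), (a r : ℂ) * (ζ^r + ζ^(2*p - r)) = (s:ℂ) := by
    have hcast : ((∑ r ∈ Finset.Icc 1 (p - 1),
        (a r : ℝ) * (2 * Real.cos (r * π / p)) : ℝ) : ℂ) = ((s:ℝ):ℂ) := by
      rw [h1]
    push_cast at hcast
    rw [← hcast]
    refine Finset.sum_congr rfl fun r hr => ?_
    rw [← hcos r hr]
    push_cast
    ring
  -- polynomial step
  set S' : Finset ℕ := (Finset.range p).erase ((p-1)/2) with hS'
  set Q : Polynomial ℚ := (∑ r ∈ Finset.Icc 1 (p-1),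
      Polynomial.C ((a r : ℚ)) * (Polynomial.X^r + Polynomial.X^(2*p - r)))
      - Polynomial.C ((s:ℚ)) with hQdef
  have hQeval : ∀ z : ℂ, Polynomial.aeval z Q
      = ∑ r ∈ Finset.Icc 1 (p-1), (a r : ℂ) * (z^r + z^(2*p - r)) - (s:ℂ) := by
    intro z
    simp only [hQdef, map_sub, map_sum, map_mul, map_add, map_pow,
      Polynomial.aeval_C, Polynomial.aeval_X]
    norm_num [eq_ratCast]
  have hQζ : Polynomial.aeval ζ Q = 0 := by rw [hQeval, hc, sub_self]
  have hconj : ∀ k ∈ S', Polynomial.aeval (ζ^(2*k+1)) Q = 0 := by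
    intro k hk
    simp only [hS', Finset.mem_erase, Finset.mem_range] at hk
    have hcop : (2*k+1).Coprime (2*p) := by
      rw [Nat.coprime_mul_iff_right]
      refine ⟨Nat.coprime_two_right.2 ⟨k, by ring⟩, ?_⟩
      refine Nat.coprime_comm.mp ((Nat.Prime.coprime_iff_not_dvd hp).2 ?_)
      intro hdvd
      obtain ⟨c, hc2⟩ := hdvd
      have hlt : p*c < p*2 := by omega
      have hc2' : c < 2 := Nat.lt_of_mul_lt_mul_left hlt
      have : c = 0 ∨ c = 1 := by omega
      rcases this with rfl | rfl <;> omega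
    exact aux_conj p (by omega) ζ hprim Q hQζ _ hcop
  have hcard : S'.card = p - 1 := by
    rw [hS', Finset.card_erase_of_mem (by simp only [Finset.mem_range]; omega),
      Finset.card_range]
  have hneg : ∀ r : ℕ, 1 ≤ r → r ≤ 2*p → ((-1:ℂ))^(2*p - r) = (-1)^r := by
    intro r h1r h2r
    have e1 : (-1:ℂ)^(2*p - r) * (-1)^r = 1 := by
      rw [← pow_add, show 2*p - r + r = 2*p from by omega, pow_mul]
      norm_num
    have e2 : (-1:ℂ)^r * (-1)^r = 1 := by
      rw [← pow_add, ← two_mul, pow_mul]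
      norm_num
    calc ((-1:ℂ))^(2*p - r) = (-1)^(2*p-r) * ((-1)^r * (-1)^r) := by rw [e2, mul_one]
      _ = ((-1)^(2*p-r) * (-1)^r) * (-1)^r := by ring
      _ = (-1)^r := by rw [e1, one_mul]
  have hmain : ∑ k ∈ S', Polynomial.aeval (ζ^(2*k+1)) Q = 0 :=
    Finset.sum_eq_zero hconj
  have hstep : ∀ k ∈ S', Polynomial.aeval (ζ^(2*k+1)) Q
      = ∑ r ∈ Finset.Icc 1 (p-1),
          (a r : ℂ) * ((ζ^r)^(2*k+1) + (ζ^(2*p - r))^(2*k+1)) - (s:ℂ) := by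
    intro k _
    rw [hQeval]
    congr 1
    refine Finset.sum_congr rfl fun r _ => ?_
    rw [pow_right_comm ζ (2*k+1) r, pow_right_comm ζ (2*k+1) (2*p - r)]
  have hmain2 : (∑ r ∈ Finset.Icc 1 (p-1), (a r : ℂ) * (-2 * (-1)^r))
      - ((p-1 : ℕ) : ℂ) * (s:ℂ) = 0 := by
    have e : ∑ k ∈ S', Polynomial.aeval (ζ^(2*k+1)) Q
        = (∑ r ∈ Finset.Icc 1 (p-1), (a r : ℂ) * (-2 * (-1)^r))
          - ((p-1 : ℕ) : ℂ) * (s:ℂ) := by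
      rw [Finset.sum_congr rfl hstep, Finset.sum_sub_distrib, Finset.sum_const, hcard,
        nsmul_eq_mul, Finset.sum_comm]
      congr 1
      refine Finset.sum_congr rfl fun r hr => ?_
      simp only [Finset.mem_Icc] at hr
      rw [← Finset.mul_sum, Finset.sum_add_distrib,
        aux_geom p (by omega) ζ hprim r
          (by intro hd; have := Nat.le_of_dvd (by omega) hd; omega),
        aux_geom p (by omega) ζ hprim (2*p - r) (by
          intro hd
          obtain ⟨c, hc2⟩ := hd
          have hlt : p*c < p*2 := by omega
          have hc2' : c < 2 := Nat.lt_of_mul_lt_mul_left hlt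
          have : c = 0 ∨ c = 1 := by omega
          rcases this with rfl | rfl <;> omega),
        hneg r hr.1 (by omega)]
      ring
    rw [← e, hmain]
  have hTZ : (-2) * (∑ r ∈ Finset.Icc 1 (p-1), (-1:ℤ)^r * a r)
      - ((p-1 : ℕ) : ℤ) * s = 0 := by
    have hcast : (((-2) * (∑ r ∈ Finset.Icc 1 (p-1), (-1:ℤ)^r * a r)
        - ((p-1 : ℕ) : ℤ) * s : ℤ) : ℂ) = 0 := by
      push_cast
      rw [← hmain2, Finset.mul_sum]
      congr 1
      refine Finset.sum_congr rfl fun r _ => ?_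
      ring
    exact_mod_cast hcast
  -- final arithmetic
  have h2' : (∑ r ∈ (Finset.Icc 1 (p-1)).filter (fun r => Even r), a r)
      + (∑ r ∈ (Finset.Icc 1 (p-1)).filter (fun r => ¬ Even r), a r) = 0 := by
    rw [Finset.sum_filter_add_sum_filter_not]
    exact h2
  have hsplitT : (∑ r ∈ (Finset.Icc 1 (p-1)).filter (fun r => Even r), (-1:ℤ)^r * a r)
      + (∑ r ∈ (Finset.Icc 1 (p-1)).filter (fun r => ¬ Even r), (-1:ℤ)^r * a r)
      = ∑ r ∈ Finset.Icc 1 (p-1), (-1:ℤ)^r * a r :=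
    Finset.sum_filter_add_sum_filter_not _ _ _
  have hA : (∑ r ∈ (Finset.Icc 1 (p-1)).filter (fun r => Even r), (-1:ℤ)^r * a r)
      = ∑ r ∈ (Finset.Icc 1 (p-1)).filter (fun r => Even r), a r := by
    refine Finset.sum_congr rfl fun r hr => ?_
    simp only [Finset.mem_filter] at hr
    rw [hr.2.neg_one_pow, one_mul]
  have hB : (∑ r ∈ (Finset.Icc 1 (p-1)).filter (fun r => ¬ Even r), ((-1:ℤ)^r * a r + a r)) = 0 := by
    refine Finset.sum_eq_zero fun r hr => ?_
    simp only [Finset.mem_filter] at hr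
    rw [(Nat.not_even_iff_odd.1 hr.2).neg_one_pow]
    ring
  rw [Finset.sum_add_distrib] at hB
  obtain ⟨k, hk⟩ : ∃ k : ℕ, p - 1 = 8*k := ⟨(p-1)/8, by omega⟩
  have hpk : ((p-1 : ℕ) : ℤ) = 8*(k:ℤ) := by exact_mod_cast congrArg (Nat.cast : ℕ → ℤ) hk
  rw [hpk] at hTZ
  refine ⟨-((k:ℤ)*s), ?_⟩
  linarith [hTZ, h2', hsplitT, hA, hB]
end

section
/- Let p ≡ 1 (mod 4) be prime and β_r = 2cos(rπ/(2p)) for r = 1, ..., 2p-1. Suppose integers a_1, ..., a_{2p-1} and s satisfy Σ_{r=1}^{2p-1} a_r β_r = s. Then Σ_{r even} a_r is even. -/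
open Real Finset

noncomputable def myPhi (p : ℕ) : Polynomial ℤ :=
  ∑ j ∈ Finset.range p, Polynomial.C ((-1:ℤ)^j) * Polynomial.X ^ (2*j)

lemma myPhi_coeff (p n : ℕ) :
    (myPhi p).coeff n = if n % 2 = 0 ∧ n / 2 < p then (-1:ℤ)^(n/2) else 0 := by
  rw [myPhi, Polynomial.finset_sum_coeff]
  simp only [Polynomial.coeff_C_mul, Polynomial.coeff_X_pow, mul_ite, mul_one, mul_zero]
  split
  · next h =>
    rw [Finset.sum_eq_single (n/2)]
    · rw [if_pos (by omega)]
    · intro j hj hne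
      rw [if_neg]; omega
    · intro hn; exact absurd (Finset.mem_range.2 h.2) hn
  · next h =>
    apply Finset.sum_eq_zero
    intro j hj
    rw [if_neg]
    simp only [Finset.mem_range] at hj
    omega

lemma myPhi_natDegree {p : ℕ} (hp : 1 ≤ p) : (myPhi p).natDegree = 2*(p-1) := by
  have h1 : (myPhi p).coeff (2*(p-1)) ≠ 0 := by
    rw [myPhi_coeff]
    rw [if_pos (by omega)]
    exact pow_ne_zero _ (by norm_num)
  have h2 : ∀ m, 2*(p-1) < m → (myPhi p).coeff m = 0 := by
    intro m hm
    rw [myPhi_coeff, if_neg]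
    omega
  exact le_antisymm (Polynomial.natDegree_le_iff_coeff_eq_zero.2 fun m hm => h2 m hm)
    (Polynomial.le_natDegree_of_ne_zero h1)

lemma myPhi_monic {p : ℕ} (hp : 1 ≤ p) (hodd : p % 2 = 1) : (myPhi p).Monic := by
  unfold Polynomial.Monic Polynomial.leadingCoeff
  rw [myPhi_natDegree hp, myPhi_coeff, if_pos (by omega)]
  have : 2*(p-1)/2 = p - 1 := by omega
  rw [this, (Nat.even_sub hp).2 (by simp [Nat.odd_iff, hodd, Nat.one_le_iff_ne_zero])|>.neg_one_pow]

lemma alt_sum_even (m : ℕ) (hm : m % 2 = 0) : ∑ j ∈ Finset.Icc 1 m, (-1:ℤ)^(j+1) = 0 := by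
  obtain ⟨k, rfl⟩ : ∃ k, m = 2*k := ⟨m/2, by omega⟩
  clear hm
  induction k with
  | zero => simp
  | succ n ih =>
    rw [show 2*(n+1) = (2*n+1)+1 by ring, Finset.sum_Icc_succ_top (by omega),
        Finset.sum_Icc_succ_top (by omega), ih]
    have e1 : (-1:ℤ)^(2*n+1+1) = 1 := Even.neg_one_pow ⟨n+1, by ring⟩
    have e2 : (-1:ℤ)^(2*n+1+1+1) = -1 := Odd.neg_one_pow ⟨n+1, by ring⟩
    rw [e1, e2]
    ring

theorem stmt14 (p : ℕ) (hp : p.Prime) (hp4 : p % 4 = 1) (a : ℕ → ℤ) (s : ℤ)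
    (h : ∑ r ∈ Finset.Icc 1 (2 * p - 1),
        (a r : ℝ) * (2 * Real.cos (r * π / (2 * p))) = s) :
    Even (∑ r ∈ (Finset.Icc 1 (2 * p - 1)).filter (fun r => Even r), a r) := by
  have hp5 : 5 ≤ p := by have := hp.two_le; omega
  have hpC : ((p:ℂ)) ≠ 0 := Nat.cast_ne_zero.2 (by omega)
  set ζ : ℂ := Complex.exp (2 * ↑π * Complex.I / ((4:ℕ) * (p:ℕ) : ℕ)) with hζdef
  have hζ : IsPrimitiveRoot ζ (4 * p) :=
    Complex.isPrimitiveRoot_exp (4 * p) (by omega)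
  have hpow : ∀ k : ℕ, ζ ^ k = Complex.exp (((k : ℂ) * π / (2*p)) * Complex.I) := by
    intro k
    rw [hζdef, ← Complex.exp_nat_mul]
    congr 1
    push_cast
    field_simp
    ring
  have h2p : ζ ^ (2*p) = -1 := by
    rw [hpow]
    rw [show ((((2*p : ℕ) : ℂ)) * ↑π / (2*(p:ℂ))) * Complex.I = ↑π * Complex.I by push_cast; field_simp]
    exact Complex.exp_pi_mul_I
  have hcos : ∀ r : ℕ, r ≤ 2*p → ((2 * Real.cos (r * π / (2*p)) : ℝ) : ℂ) = ζ ^ r - ζ ^ (2*p - r) := by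
    intro r hr
    have h1 : ζ ^ (2*p - r) = - Complex.exp ((-((r:ℂ) * π / (2*p))) * Complex.I) := by
      rw [hpow, show (((((2:ℕ)*p - r : ℕ)) : ℂ) * ↑π / (2*(p:ℂ))) * Complex.I
          = ↑π * Complex.I + (-((r:ℂ) * ↑π / (2*(p:ℂ)))) * Complex.I by
        push_cast [Nat.cast_sub hr]; field_simp; ring]
      rw [Complex.exp_add, Complex.exp_pi_mul_I]
      ring
    rw [h1]
    push_cast [Complex.ofReal_cos]
    rw [show ((r:ℂ) * ↑π / (2 * ↑p)) = ((r:ℂ) * ↑π / (2 * ↑p)) from rfl]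
    rw [Complex.two_cos, hpow]
    push_cast
    ring
  have hC : ∑ r ∈ Finset.Icc 1 (2*p-1), (a r : ℂ) * (ζ ^ r - ζ ^ (2*p - r)) = (s : ℂ) := by
    have h' : ((∑ r ∈ Finset.Icc 1 (2 * p - 1),
        (a r : ℝ) * (2 * Real.cos (r * π / (2 * p))) : ℝ) : ℂ) = (s : ℂ) := by
      rw [h]; push_cast; ring
    rw [← h', Complex.ofReal_sum]
    apply Finset.sum_congr rfl
    intro r hr
    simp only [Finset.mem_Icc] at hr
    rw [Complex.ofReal_mul, hcos r (by omega)]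
    push_cast
    ring
  set P : Polynomial ℤ :=
    (∑ r ∈ Finset.Icc 1 (2*p-1), Polynomial.C (a r - a (2*p - r)) * Polynomial.X ^ r)
      - Polynomial.C s with hPdef
  have haP : Polynomial.aeval ζ P = 0 := by
    rw [hPdef]
    simp only [map_sub, map_sum, map_mul, map_pow, Polynomial.aeval_C, Polynomial.aeval_X,
      algebraMap_int_eq, eq_intCast, map_intCast]
    have hre : ∑ r ∈ Finset.Icc 1 (2*p-1), ((a (2*p - r) : ℂ)) * ζ ^ r
        = ∑ r ∈ Finset.Icc 1 (2*p-1), ((a r : ℂ)) * ζ ^ (2*p - r) := by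
      apply Finset.sum_nbij' (i := fun r => 2*p - r) (j := fun r => 2*p - r)
      · intro x hx; simp only [Finset.mem_Icc] at *; omega
      · intro x hx; simp only [Finset.mem_Icc] at *; omega
      · intro x hx; simp only [Finset.mem_Icc] at *; omega
      · intro x hx; simp only [Finset.mem_Icc] at *; omega
      · intro x hx; simp only [Finset.mem_Icc] at hx
        rw [show 2*p - (2*p - x) = x by omega]
    have e1 : ∀ r ∈ Finset.Icc 1 (2*p-1), ((a r : ℂ) - (a (2*p - r) : ℂ)) * ζ ^ r
        = (a r : ℂ) * ζ ^ r - (a (2*p - r) : ℂ) * ζ ^ r := fun r _ => by ring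
    rw [Finset.sum_congr rfl e1, Finset.sum_sub_distrib, hre, ← Finset.sum_sub_distrib]
    have e2 : ∀ r ∈ Finset.Icc 1 (2*p-1), (a r : ℂ) * ζ ^ r - (a r : ℂ) * ζ ^ (2*p - r)
        = (a r : ℂ) * (ζ ^ r - ζ ^ (2*p - r)) := fun r _ => by ring
    rw [Finset.sum_congr rfl e2, hC, sub_self]
  have hint : IsIntegral ℤ ζ := hζ.isIntegral (by omega)
  have haPhi : Polynomial.aeval ζ (myPhi p) = 0 := by
    rw [myPhi]
    simp only [map_sum, map_mul, map_pow, Polynomial.aeval_C, Polynomial.aeval_X,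
      algebraMap_int_eq, eq_intCast, map_intCast]
    have e1 : ∀ j ∈ Finset.range p, (((-1:ℤ) : ℂ))^j * ζ^(2*j) = (-(ζ^2))^j := by
      intro j _
      rw [neg_pow, pow_mul]
      push_cast
      ring
    rw [Finset.sum_congr rfl e1]
    have hne : (-(ζ^2)) ≠ 1 := by
      intro hone
      have h4 : ζ^4 = 1 := by
        have : ζ^2 = -1 := by linear_combination -hone
        rw [show (4:ℕ) = 2*2 by rfl, pow_mul, this]; ring
      have := Nat.le_of_dvd (by norm_num) (hζ.dvd_of_pow_eq_one 4 h4)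
      omega
    rw [geom_sum_eq hne]
    have hp1 : (-(ζ^2))^p = 1 := by
      rw [neg_pow, ← pow_mul, h2p, Odd.neg_one_pow (Nat.odd_iff.2 (by omega))]
      ring
    rw [hp1, sub_self, zero_div]
  have hcyc : Polynomial.cyclotomic (4*p) ℤ = minpoly ℤ ζ :=
    Polynomial.cyclotomic_eq_minpoly hζ (by omega)
  have hdeg : (minpoly ℤ ζ).natDegree = 2*(p-1) := by
    rw [← hcyc, Polynomial.natDegree_cyclotomic]
    have h2 : Nat.Coprime 2 p := (Nat.coprime_primes Nat.prime_two hp).2 (by omega)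
    have hcop : Nat.Coprime 4 p := by
      have := Nat.Coprime.pow_left 2 h2
      norm_num at this
      exact this
    rw [Nat.totient_mul hcop, Nat.totient_prime hp, show Nat.totient 4 = 2 by decide]
  have hmono := minpoly.monic hint
  have hPhimono := myPhi_monic (p := p) (by omega) (by omega)
  have hdvdPhi : minpoly ℤ ζ ∣ myPhi p := minpoly.isIntegrallyClosed_dvd hint haPhi
  have hmin : minpoly ℤ ζ = myPhi p := by
    obtain ⟨q, hq⟩ := hdvdPhi
    have hqm : q.Monic := hmono.of_mul_monic_left (hq ▸ hPhimono)
    have hdq : q.natDegree = 0 := by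
      have hnd := Polynomial.natDegree_mul hmono.ne_zero hqm.ne_zero
      rw [← hq, myPhi_natDegree (by omega), hdeg] at hnd
      omega
    rw [hq, Polynomial.eq_one_of_monic_natDegree_zero hqm hdq, mul_one]
  have hdvd : myPhi p ∣ P := hmin ▸ minpoly.isIntegrallyClosed_dvd hint haP
  obtain ⟨Q, hQ⟩ := hdvd
  have hdegP : P.natDegree ≤ 2*p - 1 := by
    rw [hPdef]
    refine le_trans (Polynomial.natDegree_sub_le _ _) (max_le ?_ ?_)
    · apply Polynomial.natDegree_sum_le_of_forall_le
      intro r hr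
      simp only [Finset.mem_Icc] at hr
      refine le_trans (Polynomial.natDegree_C_mul_le _ _) ?_
      rw [Polynomial.natDegree_X_pow]
      omega
    · simp
  have hQdeg : Q.natDegree ≤ 1 := by
    by_cases hQ0 : Q = 0
    · simp [hQ0]
    · have hnd := Polynomial.natDegree_mul hPhimono.ne_zero hQ0
      rw [← hQ, myPhi_natDegree (by omega)] at hnd
      omega
  have hPcoeff : ∀ n, 1 ≤ n → n ≤ 2*p-1 → P.coeff n = a n - a (2*p - n) := by
    intro n h1 h2
    rw [hPdef, Polynomial.coeff_sub, Polynomial.finset_sum_coeff]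
    simp only [Polynomial.coeff_C_mul, Polynomial.coeff_X_pow, mul_ite, mul_one, mul_zero]
    rw [Finset.sum_eq_single n]
    · rw [if_pos rfl, Polynomial.coeff_C, if_neg (by omega), sub_zero]
    · intro b hb hne; rw [if_neg (fun hh => hne hh.symm)]
    · intro hn; exact absurd (Finset.mem_Icc.2 ⟨h1, h2⟩) hn
  have hP0 : P.coeff 0 = -s := by
    rw [hPdef, Polynomial.coeff_sub, Polynomial.finset_sum_coeff]
    simp only [Polynomial.coeff_C_mul, Polynomial.coeff_X_pow, mul_ite, mul_one, mul_zero]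
    rw [Finset.sum_eq_zero, Polynomial.coeff_C, if_pos rfl, zero_sub]
    intro b hb
    simp only [Finset.mem_Icc] at hb
    rw [if_neg (by omega)]
  have hQ0 : Q.coeff 0 = -s := by
    have hcc := congrArg (fun f => Polynomial.coeff f 0) hQ
    simp only [Polynomial.mul_coeff_zero] at hcc
    rw [hP0, myPhi_coeff, if_pos (by omega)] at hcc
    norm_num at hcc
    omega
  have hQexp : Q = Polynomial.C (Q.coeff 1) * Polynomial.X + Polynomial.C (Q.coeff 0) :=
    Polynomial.eq_X_add_C_of_natDegree_le_one hQdeg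
  have hc2 : ∀ n : ℕ, (myPhi p * Q).coeff (n+1)
      = (myPhi p).coeff n * Q.coeff 1 + (myPhi p).coeff (n+1) * Q.coeff 0 := by
    intro n
    conv_lhs => rw [hQexp]
    rw [mul_add, Polynomial.coeff_add,
      show myPhi p * (Polynomial.C (Q.coeff 1) * Polynomial.X)
        = (myPhi p * Polynomial.C (Q.coeff 1)) * Polynomial.X from by ring,
      Polynomial.coeff_mul_X, Polynomial.coeff_mul_C, Polynomial.coeff_mul_C]
  have hkey : ∀ j, 1 ≤ j → j ≤ p - 1 → a (2*j) - a (2*p - 2*j) = (-1:ℤ)^(j+1) * s := by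
    intro j h1 h2
    have hc : P.coeff (2*j) = a (2*j) - a (2*p - 2*j) := hPcoeff (2*j) (by omega) (by omega)
    rw [hQ] at hc
    have hc3 := hc2 (2*j-1)
    rw [show 2*j-1+1 = 2*j by omega] at hc3
    have h4 := hc.symm.trans hc3
    rw [myPhi_coeff, myPhi_coeff, if_neg (by omega), if_pos (by omega),
      show 2*j/2 = j by omega, hQ0] at h4
    rw [h4, pow_succ]
    ring
  set m := (p-1)/2 with hm
  have hsum1 : ∑ r ∈ (Finset.Icc 1 (2*p-1)).filter (fun r => Even r), a r
      = ∑ j ∈ Finset.Icc 1 (p-1), a (2*j) := by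
    apply Finset.sum_nbij' (i := fun r => r/2) (j := fun j => 2*j)
    · intro x hx
      simp only [Finset.mem_filter, Finset.mem_Icc, Nat.even_iff] at hx
      simp only [Finset.mem_Icc]; omega
    · intro x hx
      simp only [Finset.mem_Icc] at hx
      simp only [Finset.mem_filter, Finset.mem_Icc, Nat.even_iff]; omega
    · intro x hx
      simp only [Finset.mem_filter, Finset.mem_Icc, Nat.even_iff] at hx; omega
    · intro x hx; omega
    · intro x hx
      simp only [Finset.mem_filter, Finset.mem_Icc, Nat.even_iff] at hx
      congr 1; omega
  have hicc : ∀ n:ℕ, Finset.Icc 1 n = Finset.Ioc 0 n := fun n => Finset.Icc_add_one_left_eq_Ioc 0 n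
  have hsplit : ∑ j ∈ Finset.Icc 1 (p-1), a (2*j)
      = ∑ j ∈ Finset.Icc 1 m, a (2*j) + ∑ j ∈ Finset.Icc (m+1) (p-1), a (2*j) := by
    rw [hicc, hicc, show Finset.Icc (m+1) (p-1) = Finset.Ioc m (p-1) from Finset.Icc_add_one_left_eq_Ioc m (p-1)]
    exact (Finset.sum_Ioc_consecutive (fun j => a (2*j)) (show (0:ℕ) ≤ m by omega) (show m ≤ p-1 by omega)).symm
  have hrefl : ∑ j ∈ Finset.Icc (m+1) (p-1), a (2*j)
      = ∑ j ∈ Finset.Icc 1 m, a (2*(p - j)) := by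
    apply Finset.sum_nbij' (i := fun j => p - j) (j := fun j => p - j)
    · intro x hx; simp only [Finset.mem_Icc] at *; omega
    · intro x hx; simp only [Finset.mem_Icc] at *; omega
    · intro x hx; simp only [Finset.mem_Icc] at hx; omega
    · intro x hx; simp only [Finset.mem_Icc] at hx; omega
    · intro x hx
      simp only [Finset.mem_Icc] at hx
      congr 2; omega
  have hfinal : ∀ j ∈ Finset.Icc 1 m, a (2*j) + a (2*(p - j))
      = 2 * a (2*(p-j)) + (-1:ℤ)^(j+1) * s := by
    intro j hj
    simp only [Finset.mem_Icc] at hj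
    have hk := hkey j hj.1 (by omega)
    rw [show 2*(p-j) = 2*p - 2*j by omega]
    linear_combination hk
  rw [hsum1, hsplit, hrefl, ← Finset.sum_add_distrib, Finset.sum_congr rfl hfinal,
    Finset.sum_add_distrib, ← Finset.sum_mul, alt_sum_even m (by omega), zero_mul,
    add_zero, ← Finset.mul_sum]
  exact even_two_mul _
end

section
/- Let Y and Z be finite simple graphs with adjacency spectral projectors. Let y_1, y_2 be vertices of Y, E a spectral projector of Y, z a vertex of Z, and F a spectral projector of Z with F e_z ≠ 0. If W is a spectral projector of the cartesian product Y □ Z with (E ⊗ F)W ≠ 0 and W e_{(y_1,z)} = α W e_{(y_2,z)} for some scalar α, then E e_{y_1} = α E e_{y_2}. -/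
open Matrix Kronecker

/-- `W` is the (orthogonal) spectral projector of the symmetric matrix `A`
onto the eigenspace of the eigenvalue `θ`: it is a symmetric idempotent whose
image lies in the `θ`-eigenspace and which fixes every `θ`-eigenvector. -/
def IsSpectralProjector {V : Type*} [Fintype V] [DecidableEq V]
    (A W : Matrix V V ℝ) (θ : ℝ) : Prop :=
  W * W = W ∧ W.IsSymm ∧ A * W = θ • W ∧
    ∀ v : V → ℝ, A.mulVec v = θ • v → W.mulVec v = v

theorem stmt15 {VY VZ : Type*} [Fintype VY] [DecidableEq VY]
    [Fintype VZ] [DecidableEq VZ]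
    (Y : SimpleGraph VY) (Z : SimpleGraph VZ)
    [DecidableRel Y.Adj] [DecidableRel Z.Adj]
    (y₁ y₂ : VY) (z : VZ)
    (θ μ ν : ℝ) (E : Matrix VY VY ℝ) (F : Matrix VZ VZ ℝ)
    (hE : IsSpectralProjector (Y.adjMatrix ℝ) E θ)
    (hF : IsSpectralProjector (Z.adjMatrix ℝ) F μ)
    (hFz : F.mulVec (Pi.single z 1) ≠ 0)
    (W : Matrix (VY × VZ) (VY × VZ) ℝ)
    (hW : IsSpectralProjector
      (Matrix.kroneckerMap (· * ·) (Y.adjMatrix ℝ) (1 : Matrix VZ VZ ℝ) +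
        Matrix.kroneckerMap (· * ·) (1 : Matrix VY VY ℝ) (Z.adjMatrix ℝ)) W ν)
    (hEF : Matrix.kroneckerMap (· * ·) E F * W ≠ 0)
    (α : ℝ)
    (hWv : W.mulVec (Pi.single (y₁, z) 1) = α • W.mulVec (Pi.single (y₂, z) 1)) :
    E.mulVec (Pi.single y₁ 1) = α • E.mulVec (Pi.single y₂ 1) := by
  obtain ⟨hE2, hEs, hAE, hEfix⟩ := hE
  obtain ⟨hF2, hFs, hAF, hFfix⟩ := hF
  obtain ⟨hW2, hWs, hAW, hWfix⟩ := hW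
  set A := (Matrix.kroneckerMap (· * ·) (Y.adjMatrix ℝ) (1 : Matrix VZ VZ ℝ) +
      Matrix.kroneckerMap (· * ·) (1 : Matrix VY VY ℝ) (Z.adjMatrix ℝ)) with hA
  set P := Matrix.kroneckerMap (· * ·) E F with hP
  -- A * P = (θ + μ) • P
  have hAP : A * P = (θ + μ) • P := by
    rw [hA, hP, add_mul]
    rw [show (Matrix.kroneckerMap (· * ·) (Y.adjMatrix ℝ) (1 : Matrix VZ VZ ℝ)) =
        (Y.adjMatrix ℝ) ⊗ₖ 1 from rfl]
    rw [show (Matrix.kroneckerMap (· * ·) (1 : Matrix VY VY ℝ) (Z.adjMatrix ℝ)) =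
        (1 : Matrix VY VY ℝ) ⊗ₖ (Z.adjMatrix ℝ) from rfl]
    rw [show (Matrix.kroneckerMap (· * ·) E F) = E ⊗ₖ F from rfl]
    rw [← Matrix.mul_kronecker_mul, ← Matrix.mul_kronecker_mul, hAE, hAF,
      Matrix.one_mul, Matrix.one_mul, Matrix.smul_kronecker, Matrix.kronecker_smul,
      add_smul]
  -- A is symmetric
  have hAs : A.IsSymm := by
    rw [Matrix.IsSymm, hA, Matrix.transpose_add, ← Matrix.kroneckerMap_transpose,
      ← Matrix.kroneckerMap_transpose, Matrix.transpose_one, Matrix.transpose_one,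
      (Y.isSymm_adjMatrix).eq, (Z.isSymm_adjMatrix).eq]
  -- P is symmetric
  have hPs : P.IsSymm := by
    rw [Matrix.IsSymm, hP, ← Matrix.kroneckerMap_transpose, hEs.eq, hFs.eq]
  -- P * A = (θ + μ) • P
  have hPA : P * A = (θ + μ) • P := by
    have h := congrArg Matrix.transpose hAP
    rwa [Matrix.transpose_mul, hPs.eq, hAs.eq, Matrix.transpose_smul, hPs.eq] at h
  -- ν = θ + μ
  have hνθμ : ν = θ + μ := by
    have h1 : P * (A * W) = ν • (P * W) := by rw [hAW, Matrix.mul_smul]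
    have h2 : P * (A * W) = (θ + μ) • (P * W) := by
      rw [← Matrix.mul_assoc, hPA, Matrix.smul_mul]
    by_contra hne
    refine hEF ?_
    have h3 : (ν - (θ + μ)) • (P * W) = 0 := by
      rw [sub_smul, ← h1, ← h2, sub_self]
    exact (smul_eq_zero.mp h3).resolve_left (sub_ne_zero.mpr hne)
  -- W fixes columns of P, so W * P = P
  have hWP : W * P = P := by
    ext i j
    have hcol : A.mulVec (P.mulVec (Pi.single j 1)) = ν • P.mulVec (Pi.single j 1) := by
      rw [Matrix.mulVec_mulVec, hAP, hνθμ, Matrix.smul_mulVec]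
    have h := congrFun (hWfix _ hcol) i
    rw [Matrix.mulVec_mulVec] at h
    simpa using h
  -- hence P * W = P
  have hPW : P * W = P := by
    have h := congrArg Matrix.transpose hWP
    rwa [Matrix.transpose_mul, hPs.eq, hWs.eq] at h
  -- Apply P to hWv
  have key : P.mulVec (Pi.single (y₁, z) 1) = α • P.mulVec (Pi.single (y₂, z) 1) := by
    have h1 := congrArg P.mulVec hWv
    rwa [Matrix.mulVec_mulVec, hPW, Matrix.mulVec_smul, Matrix.mulVec_mulVec, hPW] at h1
  -- extract coordinates
  obtain ⟨w, hw⟩ : ∃ w, F w z ≠ 0 := by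
    by_contra h
    push_neg at h
    exact hFz (by ext w; simp [Matrix.mulVec_single, h w])
  ext u
  have h := congrFun key (u, w)
  simp only [Matrix.mulVec_single_one, Matrix.col_apply, Pi.smul_apply, smul_eq_mul, mul_one, hP,
    Matrix.kroneckerMap_apply] at h ⊢
  have h' : E u y₁ * F w z = α * E u y₂ * F w z := by
    rw [h]; ring
  have := mul_right_cancel₀ hw h'
  linarith
end

section
/- Let Y, Z be finite simple graphs, y_1, y_2 vertices of Y and z a vertex of Z. If (y_1, z) and (y_2, z) are strongly cospectral in Y □ Z, then y_1 and y_2 are strongly cospectral in Y. -/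
open Matrix

/-- Two vertices are strongly cospectral with respect to the matrix `A` if every
spectral projector sends their characteristic vectors to equal or opposite vectors. -/
def StronglyCospectral {V : Type*} [Fintype V] [DecidableEq V]
    (A : Matrix V V ℝ) (u v : V) : Prop :=
  ∀ (θ : ℝ) (W : Matrix V V ℝ), IsSpectralProjector A W θ →
    W.mulVec (Pi.single u 1) = W.mulVec (Pi.single v 1) ∨
    W.mulVec (Pi.single u 1) = -W.mulVec (Pi.single v 1)

lemma exists_eigenbasis {V : Type*} [Fintype V] [DecidableEq V] {B : Matrix V V ℝ}
    (hB : B.IsSymm) :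
    ∃ (μ : V → ℝ) (f : V → V → ℝ),
      (∀ i, B.mulVec (f i) = μ i • f i) ∧
      (∀ i j, ∑ x, f i x * f j x = if i = j then (1:ℝ) else 0) ∧
      (∀ a b, ∑ i, f i a * f i b = if a = b then (1:ℝ) else 0) := by
  have hH : B.IsHermitian := by
    rwa [Matrix.IsHermitian, conjTranspose_eq_transpose_of_trivial]
  refine ⟨hH.eigenvalues, fun i x => hH.eigenvectorBasis i x, ?_, ?_, ?_⟩
  · intro i
    exact hH.mulVec_eigenvectorBasis i
  · intro i j
    have := orthonormal_iff_ite.mp hH.eigenvectorBasis.orthonormal i j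
    rw [PiLp.inner_apply] at this
    simpa [mul_comm] using this
  · intro a b
    have := hH.eigenvectorBasis.sum_inner_mul_inner
      (EuclideanSpace.single a (1:ℝ)) (EuclideanSpace.single b (1:ℝ))
    simp only [EuclideanSpace.inner_single_left, EuclideanSpace.inner_single_right,
      RCLike.star_def, _root_.map_one, one_mul, mul_one, starRingEnd_apply, star_trivial] at this
    rw [show (EuclideanSpace.single a (1:ℝ)) b = if a = b then (1:ℝ) else 0 by
      simp [EuclideanSpace.single_apply, eq_comm]] at this
    rw [← this]


theorem stmt16 {VY VZ : Type*} [Fintype VY] [DecidableEq VY]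
    [Fintype VZ] [DecidableEq VZ]
    (Y : SimpleGraph VY) (Z : SimpleGraph VZ)
    [DecidableRel Y.Adj] [DecidableRel Z.Adj]
    (y₁ y₂ : VY) (z : VZ)
    (h : StronglyCospectral
      (Matrix.kroneckerMap (· * ·) (Y.adjMatrix ℝ) (1 : Matrix VZ VZ ℝ) +
        Matrix.kroneckerMap (· * ·) (1 : Matrix VY VY ℝ) (Z.adjMatrix ℝ))
      (y₁, z) (y₂, z)) :
    StronglyCospectral (Y.adjMatrix ℝ) y₁ y₂ := by
  intro θ W hW
  obtain ⟨hWW, hWsym, hAW, hfix⟩ := hW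
  set AY := Y.adjMatrix ℝ with hAY
  set AZ := Z.adjMatrix ℝ with hAZ
  set A := Matrix.kroneckerMap (· * ·) AY (1 : Matrix VZ VZ ℝ) +
        Matrix.kroneckerMap (· * ·) (1 : Matrix VY VY ℝ) AZ with hA
  obtain ⟨θv, w, hw_eig, hw_on, hw_comp⟩ := exists_eigenbasis (Y.isSymm_adjMatrix (α := ℝ))
  obtain ⟨μv, f, hf_eig, hf_on, hf_comp⟩ := exists_eigenbasis (Z.isSymm_adjMatrix (α := ℝ))
  -- choose j₀ with f j₀ z ≠ 0
  obtain ⟨j₀, hj₀⟩ : ∃ j, f j z ≠ 0 := by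
    by_contra hcon
    push_neg at hcon
    have := hf_comp z z
    simp only [if_pos rfl] at this
    rw [Finset.sum_eq_zero (fun i _ => by rw [hcon i, zero_mul])] at this
    exact one_ne_zero this.symm
  set lam : ℝ := θ + μv j₀ with hlam
  set S : Finset (VY × VZ) := Finset.univ.filter (fun s => θv s.1 + μv s.2 = lam) with hS
  set v : VY × VZ → (VY × VZ) → ℝ := fun s p => w s.1 p.1 * f s.2 p.2 with hv
  have factor : ∀ (g : VY → ℝ) (k : VZ → ℝ),
      ∑ p : VY × VZ, g p.1 * k p.2 = (∑ y, g y) * (∑ c, k c) := by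
    intro g k
    rw [Fintype.sum_prod_type]
    simp_rw [← Finset.mul_sum, ← Finset.sum_mul]
  -- tensor orthonormality
  have orth : ∀ s t : VY × VZ, ∑ p, v s p * v t p = if s = t then (1:ℝ) else 0 := by
    intro s t
    have : ∀ p : VY × VZ, v s p * v t p = (w s.1 p.1 * w t.1 p.1) * (f s.2 p.2 * f t.2 p.2) :=
      fun p => by simp only [hv]; ring
    rw [Finset.sum_congr rfl fun p _ => this p,
      factor (fun y => w s.1 y * w t.1 y) (fun c => f s.2 c * f t.2 c), hw_on, hf_on]
    by_cases h1 : s.1 = t.1 <;> by_cases h2 : s.2 = t.2 <;>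
      simp [Prod.ext_iff, h1, h2]
  have comp : ∀ p q : VY × VZ, ∑ s, v s p * v s q = if p = q then (1:ℝ) else 0 := by
    intro p q
    have : ∀ s : VY × VZ, v s p * v s q = (w s.1 p.1 * w s.1 q.1) * (f s.2 p.2 * f s.2 q.2) :=
      fun s => by simp only [hv]; ring
    rw [Finset.sum_congr rfl fun s _ => this s,
      factor (fun i => w i p.1 * w i q.1) (fun j => f j p.2 * f j q.2), hw_comp, hf_comp]
    by_cases h1 : p.1 = q.1 <;> by_cases h2 : p.2 = q.2 <;>
      simp [Prod.ext_iff, h1, h2]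
  have kron1 : ∀ (u : VY → ℝ) (x : VZ → ℝ),
      (Matrix.kroneckerMap (· * ·) AY (1 : Matrix VZ VZ ℝ)).mulVec (fun p => u p.1 * x p.2)
        = fun p => (AY.mulVec u) p.1 * x p.2 := by
    intro u x
    funext p
    simp only [Matrix.mulVec, dotProduct, Matrix.kroneckerMap_apply, Matrix.one_apply]
    rw [Fintype.sum_prod_type, Finset.sum_mul]
    refine Finset.sum_congr rfl fun y _ => ?_
    rw [Finset.sum_eq_single p.2]
    · simp [mul_comm, mul_left_comm, mul_assoc]
    · intro b _ hb
      simp [Ne.symm hb]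
    · simp
  have kron2 : ∀ (u : VY → ℝ) (x : VZ → ℝ),
      (Matrix.kroneckerMap (· * ·) (1 : Matrix VY VY ℝ) AZ).mulVec (fun p => u p.1 * x p.2)
        = fun p => u p.1 * (AZ.mulVec x) p.2 := by
    intro u x
    funext p
    simp only [Matrix.mulVec, dotProduct, Matrix.kroneckerMap_apply, Matrix.one_apply]
    rw [Fintype.sum_prod_type, Finset.sum_eq_single p.1]
    · rw [Finset.mul_sum]
      refine Finset.sum_congr rfl fun c _ => ?_
      simp [mul_comm, mul_left_comm, mul_assoc]
    · intro y _ hy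
      simp [Ne.symm hy]
    · simp
  have eig : ∀ s : VY × VZ, A.mulVec (v s) = (θv s.1 + μv s.2) • v s := by
    intro s
    have : A.mulVec (v s) = (Matrix.kroneckerMap (· * ·) AY (1 : Matrix VZ VZ ℝ)).mulVec (v s)
        + (Matrix.kroneckerMap (· * ·) (1 : Matrix VY VY ℝ) AZ).mulVec (v s) :=
      Matrix.add_mulVec _ _ _
    rw [this]
    have hv' : v s = fun p => w s.1 p.1 * f s.2 p.2 := rfl
    rw [hv', kron1, kron2, hw_eig, hf_eig]
    funext p
    simp only [Pi.add_apply, Pi.smul_apply, smul_eq_mul]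
    ring
  have hAsym' : A.IsSymm := by
    refine Matrix.IsSymm.add ?_ ?_
    · rw [Matrix.IsSymm, ← Matrix.kroneckerMap_transpose, Matrix.transpose_one,
        Y.transpose_adjMatrix]
    · rw [Matrix.IsSymm, ← Matrix.kroneckerMap_transpose, Matrix.transpose_one,
        Z.transpose_adjMatrix]
  have hAsymm : ∀ p q, A p q = A q p := by
    intro p q
    conv_lhs => rw [← hAsym']
    rfl
  set U : Matrix (VY × VZ) (VY × VZ) ℝ := fun p q => ∑ s ∈ S, v s p * v s q with hU
  have hproj : IsSpectralProjector A U lam := by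
    refine ⟨?_, ?_, ?_, ?_⟩
    · ext p q
      show ∑ r, (∑ s ∈ S, v s p * v s r) * (∑ t ∈ S, v t r * v t q) = ∑ s ∈ S, v s p * v s q
      simp_rw [Finset.sum_mul, Finset.mul_sum]
      rw [Finset.sum_comm]
      refine Finset.sum_congr rfl fun s hs => ?_
      rw [Finset.sum_comm]
      have hrec : ∀ t ∈ S, (∑ r, v s p * v s r * (v t r * v t q))
          = (if s = t then (1:ℝ) else 0) * (v s p * v t q) := by
        intro t _
        rw [← orth s t, Finset.sum_mul]
        exact Finset.sum_congr rfl fun r _ => by ring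
      rw [Finset.sum_congr rfl hrec]
      simp_rw [ite_mul, one_mul, zero_mul]
      rw [Finset.sum_ite_eq S s fun t => v s p * v t q, if_pos hs]
    · unfold Matrix.IsSymm
      ext p q
      rw [Matrix.transpose_apply]
      show ∑ s ∈ S, v s q * v s p = ∑ s ∈ S, v s p * v s q
      exact Finset.sum_congr rfl fun s _ => mul_comm _ _
    · ext p q
      show ∑ r, A p r * (∑ s ∈ S, v s r * v s q) = lam • (∑ s ∈ S, v s p * v s q)
      simp_rw [Finset.mul_sum]
      rw [Finset.sum_comm, smul_eq_mul, Finset.mul_sum]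
      refine Finset.sum_congr rfl fun s hs => ?_
      have h1 : ∑ r, A p r * v s r = (θv s.1 + μv s.2) * v s p := by
        have := congrFun (eig s) p
        simpa [Matrix.mulVec, dotProduct, smul_eq_mul] using this
      calc ∑ r, A p r * (v s r * v s q) = (∑ r, A p r * v s r) * v s q := by
            rw [Finset.sum_mul]; exact Finset.sum_congr rfl fun r _ => by ring
        _ = (θv s.1 + μv s.2) * v s p * v s q := by rw [h1]
        _ = lam * (v s p * v s q) := by
            rw [(Finset.mem_filter.mp hs).2]; ring
    · intro u hu
      set c : VY × VZ → ℝ := fun s => ∑ p, v s p * u p with hc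
      have hAdot : ∀ s : VY × VZ, (θv s.1 + μv s.2) * c s = lam * c s := by
        intro s
        have h1 : ∑ p, ((θv s.1 + μv s.2) • v s) p * u p = (θv s.1 + μv s.2) * c s := by
          simp only [Pi.smul_apply, smul_eq_mul, hc]
          rw [Finset.mul_sum]
          exact Finset.sum_congr rfl fun p _ => by ring
        have h2 : ∑ p, (A.mulVec (v s)) p * u p = ∑ q, v s q * (A.mulVec u) q := by
          simp only [Matrix.mulVec, dotProduct]
          simp_rw [Finset.sum_mul, Finset.mul_sum]
          rw [Finset.sum_comm]
          refine Finset.sum_congr rfl fun q _ => Finset.sum_congr rfl fun p _ => ?_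
          rw [hAsymm p q]; ring
        calc (θv s.1 + μv s.2) * c s = ∑ p, (A.mulVec (v s)) p * u p := by
              rw [eig s]; exact h1.symm
          _ = ∑ q, v s q * (A.mulVec u) q := h2
          _ = lam * c s := by
              rw [hu, hc, Finset.mul_sum]
              exact Finset.sum_congr rfl fun q _ => by
                simp only [Pi.smul_apply, smul_eq_mul]; ring
      have czero : ∀ s ∉ S, c s = 0 := by
        intro s hs
        have hne : θv s.1 + μv s.2 ≠ lam := fun hEq =>
          hs (Finset.mem_filter.mpr ⟨Finset.mem_univ s, hEq⟩)
        have h5 : (θv s.1 + μv s.2 - lam) * c s = 0 := by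
          have := hAdot s; ring_nf; ring_nf at this; linarith
        rcases mul_eq_zero.mp h5 with h | h
        · exact absurd (by linarith) hne
        · exact h
      have hurep : ∀ p, u p = ∑ s : VY × VZ, c s * v s p := by
        intro p
        have h3 : ∑ q, (∑ s : VY × VZ, v s p * v s q) * u q = u p := by
          simp_rw [comp]
          simp [Finset.sum_ite_eq]
        rw [← h3]
        simp_rw [Finset.sum_mul]
        rw [Finset.sum_comm]
        refine Finset.sum_congr rfl fun s _ => ?_
        rw [hc, Finset.sum_mul]
        exact Finset.sum_congr rfl fun q _ => by ring
      funext p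
      show ∑ q, (∑ s ∈ S, v s p * v s q) * u q = u p
      simp_rw [Finset.sum_mul]
      rw [Finset.sum_comm]
      calc ∑ s ∈ S, ∑ q, v s p * v s q * u q = ∑ s ∈ S, c s * v s p := by
            refine Finset.sum_congr rfl fun s _ => ?_
            rw [hc, Finset.sum_mul]
            exact Finset.sum_congr rfl fun q _ => by ring
        _ = ∑ s : VY × VZ, c s * v s p := by
            refine Finset.sum_subset (Finset.subset_univ S) fun s _ hs => ?_
            rw [czero s hs, zero_mul]
        _ = u p := (hurep p).symm
  -- W representation
  have hWA : W * AY = θ • W := by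
    have hT := congrArg Matrix.transpose hAW
    rwa [Matrix.transpose_mul, hWsym, Y.transpose_adjMatrix, Matrix.transpose_smul, hWsym] at hT
  have hWw2 : ∀ i, θv i = θ → W.mulVec (w i) = w i := fun i hi =>
    hfix (w i) (by rw [hw_eig i, hi])
  have hWw : ∀ i, θv i ≠ θ → W.mulVec (w i) = 0 := by
    intro i hi
    have e1 : W *ᵥ (AY *ᵥ w i) = θv i • (W *ᵥ w i) := by
      rw [hw_eig i, Matrix.mulVec_smul]
    have e2 : W *ᵥ (AY *ᵥ w i) = θ • (W *ᵥ w i) := by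
      rw [Matrix.mulVec_mulVec, hWA, Matrix.smul_mulVec]
    have e3 : (θv i - θ) • (W *ᵥ w i) = 0 := by
      rw [sub_smul, ← e1, e2, sub_self]
    exact (smul_eq_zero.mp e3).resolve_left (sub_ne_zero.mpr hi)
  have hWrep : ∀ a y : VY, W a y = ∑ i ∈ Finset.univ.filter (fun i => θv i = θ), w i a * w i y := by
    intro a y
    have h0 : W a y = ∑ i, (W.mulVec (w i)) a * w i y := by
      symm
      simp only [Matrix.mulVec, dotProduct]
      simp_rw [Finset.sum_mul]
      rw [Finset.sum_comm]
      have hb : ∀ b, (∑ i, W a b * w i b * w i y) = W a b * (if b = y then (1:ℝ) else 0) := by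
        intro b
        rw [← hw_comp b y, Finset.mul_sum]
        exact Finset.sum_congr rfl fun i _ => by ring
      rw [Finset.sum_congr rfl fun b _ => hb b]
      simp [Finset.sum_ite_eq']
    rw [h0, ← Finset.sum_filter_add_sum_filter_not Finset.univ (fun i => θv i = θ)
      (fun i => (W.mulVec (w i)) a * w i y)]
    have e1 : ∑ i ∈ Finset.univ.filter (fun i => θv i = θ), (W.mulVec (w i)) a * w i y
        = ∑ i ∈ Finset.univ.filter (fun i => θv i = θ), w i a * w i y :=
      Finset.sum_congr rfl fun i hi => by rw [hWw2 i (Finset.mem_filter.mp hi).2]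
    have e2 : ∑ i ∈ Finset.univ.filter (fun i => ¬θv i = θ), (W.mulVec (w i)) a * w i y = 0 :=
      Finset.sum_eq_zero fun i hi => by
        rw [hWw i (Finset.mem_filter.mp hi).2]; simp
    rw [e1, e2, add_zero]
  -- extraction
  have extract : ∀ (y : VY) (a : VY),
      ∑ c, f j₀ c * (U.mulVec (Pi.single (y, z) 1)) (a, c) = f j₀ z * W a y := by
    intro y a
    have hUm : ∀ p : VY × VZ, (U.mulVec (Pi.single (y, z) 1)) p = ∑ s ∈ S, v s p * v s (y, z) := by
      intro p
      rw [Matrix.mulVec_single]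
      exact mul_one _
    simp_rw [hUm, Finset.mul_sum]
    rw [Finset.sum_comm]
    have step1 : ∀ s ∈ S, (∑ c, f j₀ c * (v s (a, c) * v s (y, z)))
        = (w s.1 a * w s.1 y * f s.2 z) * (if j₀ = s.2 then (1:ℝ) else 0) := by
      intro s _
      rw [← hf_on j₀ s.2, Finset.mul_sum]
      refine Finset.sum_congr rfl fun cc _ => ?_
      simp only [hv]; ring
    rw [Finset.sum_congr rfl step1]
    have step2 : ∑ s ∈ S, (w s.1 a * w s.1 y * f s.2 z) * (if j₀ = s.2 then (1:ℝ) else 0)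
        = ∑ s ∈ S.filter (fun s => j₀ = s.2), w s.1 a * w s.1 y * f s.2 z := by
      rw [Finset.sum_filter (fun s => j₀ = s.2) (fun s : VY × VZ => w s.1 a * w s.1 y * f s.2 z)]
      exact Finset.sum_congr rfl fun s _ => by rw [mul_ite, mul_one, mul_zero]
    rw [step2]
    have step3 : S.filter (fun s => j₀ = s.2)
        = (Finset.univ.filter (fun i => θv i = θ)).image (fun i => (i, j₀)) := by
      ext s
      simp only [hS, Finset.mem_filter, Finset.mem_image, Finset.mem_univ, true_and,
        Finset.filter_filter, hlam]
      constructor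
      · rintro ⟨h1, h2⟩
        refine ⟨s.1, by rw [← h2] at h1; linarith, ?_⟩
        rw [h2]
      · rintro ⟨i, hi, rfl⟩
        exact ⟨by rw [hi], rfl⟩
    rw [step3, Finset.sum_image (fun i _ j _ hij => (Prod.mk.injEq _ _ _ _ ▸ hij).1)]
    rw [hWrep a y, Finset.mul_sum]
    exact Finset.sum_congr rfl fun i _ => by ring
  
  rcases h lam U hproj with hcase | hcase
  · left
    funext a
    have h1 := congrFun hcase
    have e1 := extract y₁ a
    have e2 := extract y₂ a
    rw [hcase] at e1
    have : f j₀ z * W a y₁ = f j₀ z * W a y₂ := by rw [← e1, ← e2]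
    simp only [Matrix.mulVec_single, op_smul_eq_smul, one_smul, Matrix.col_apply, mul_one]
    exact mul_left_cancel₀ hj₀ this
  · right
    funext a
    have e1 := extract y₁ a
    have e2 := extract y₂ a
    rw [hcase] at e1
    have : f j₀ z * W a y₁ = -(f j₀ z * W a y₂) := by
      rw [← e1, ← e2, ← Finset.sum_neg_distrib]
      exact Finset.sum_congr rfl fun c _ => by simp only [Pi.neg_apply]; ring
    simp only [Matrix.mulVec_single, op_smul_eq_smul, one_smul, Matrix.col_apply, mul_one, Pi.neg_apply]
    have := mul_left_cancel₀ hj₀ (by rw [this]; ring_nf : f j₀ z * W a y₁ = f j₀ z * (-W a y₂))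
    linarith [this]
end
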